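/- arXiv:2008.13376 — 4 statements merged into one kernel-verified Lean document; each statement's English description precedes it below -/
import Mathlib

section
/- Let μ be a norm on F_∞^n and let λ_1, …, λ_n ∈ Λ. Then the following two conditions are equivalent: (i) (λ_1, …, λ_n) is an A-basis of Λ with μ(λ_i) ≤ μ(λ_{i+1}) for 1 ≤ i ≤ n−1, and μ(Σ_{i=1}^n x_i·λ_i) = max_{1≤i≤n} |x_i|·μ(λ_i) for all (x_1, …, x_n) ∈ F_∞^n; (ii) for each 1 ≤ i ≤ n, setting Λ_{i−1} = Σ_{j=1}^{i−1} A·λ_j, we have λ_i ∉ Λ_{i−1} and μ(λ_i) ≤ μ(λ) for every λ ∈ Λ ∖ Λ_{i−1}. -/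
noncomputable section

/-- The data of the field `F_∞ = F_q((1/T))`, the completion of `F_q(T)` at the place at
infinity, packaged axiomatically: a field `Finf` which is an `F_q[T]`-algebra, together with
its standard absolute value `v` (so `v a = q^{deg a}` for nonzero `a ∈ A = F_q[T]`), such
that every element is a polynomial plus an element of absolute value `< 1`, and which is
complete. -/
structure InftySetup (Fq : Type*) [Field Fq] [Fintype Fq]
    (Finf : Type*) [Field Finf] [Algebra (Polynomial Fq) Finf] : Type _ where
  /-- the standard absolute value of `F_∞` -/
  v : Finf → ℝ
  v_zero : v 0 = 0
  v_pos : ∀ x : Finf, x ≠ 0 → 0 < v x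
  v_mul : ∀ x y : Finf, v (x * y) = v x * v y
  v_add : ∀ x y : Finf, v (x + y) ≤ max (v x) (v y)
  /-- `|a| = q^{deg a}` for nonzero `a ∈ A` -/
  v_poly : ∀ a : Polynomial Fq, a ≠ 0 →
    v (algebraMap (Polynomial Fq) Finf a) = (Fintype.card Fq : ℝ) ^ a.natDegree
  /-- `F_∞ = A + m_∞` -/
  poly_dense : ∀ x : Finf, ∃ a : Polynomial Fq,
    v (x - algebraMap (Polynomial Fq) Finf a) < 1
  /-- `F_∞` is complete -/
  complete : ∀ f : ℕ → Finf,
    (∀ ε : ℝ, 0 < ε → ∃ N : ℕ, ∀ m ≥ N, ∀ k ≥ N, v (f m - f k) < ε) →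
    ∃ l : Finf, ∀ ε : ℝ, 0 < ε → ∃ N : ℕ, ∀ m ≥ N, v (f m - l) < ε

namespace InftySetup

variable {Fq : Type*} [Field Fq] [Fintype Fq]
variable {Finf : Type*} [Field Finf] [Algebra (Polynomial Fq) Finf]

/-- A norm on the `F_∞`-vector space `F_∞^n`. -/
def IsNorm (D : InftySetup Fq Finf) {n : ℕ} (μ : (Fin n → Finf) → ℝ) : Prop :=
  (∀ (a : Finf) (x : Fin n → Finf), μ (a • x) = D.v a * μ x) ∧
  (∀ x y : Fin n → Finf, μ (x + y) ≤ max (μ x) (μ y)) ∧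
  (∀ x : Fin n → Finf, x ≠ 0 → 0 < μ x)

end InftySetup

/-- The lattice `Λ = A^n ⊆ F_∞^n`. -/
def LambdaSet (Fq : Type*) [Field Fq] [Fintype Fq]
    (Finf : Type*) [Field Finf] [Algebra (Polynomial Fq) Finf] (n : ℕ) :
    Set (Fin n → Finf) :=
  {x | ∀ i, ∃ a : Polynomial Fq, x i = algebraMap (Polynomial Fq) Finf a}

/-- `Λ_{i-1} = Σ_{j<i} A·λ_j`, the `A`-span of `λ_j` for `j < i`. -/
def partialSpan (Fq : Type*) [Field Fq] [Fintype Fq]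
    {Finf : Type*} [Field Finf] [Algebra (Polynomial Fq) Finf] {n : ℕ}
    (lam : Fin n → (Fin n → Finf)) (i : Fin n) : Set (Fin n → Finf) :=
  {x | ∃ c : Fin n → Polynomial Fq, (∀ j, ¬ j < i → c j = 0) ∧
    x = ∑ j, algebraMap (Polynomial Fq) Finf (c j) • lam j}

/-- Condition (i): `(λ_1, …, λ_n)` is an `A`-basis of `Λ` with `μ(λ_i) ≤ μ(λ_{i+1})` which is
orthonormal for `μ`. -/
def CondI {Fq : Type*} [Field Fq] [Fintype Fq]
    {Finf : Type*} [Field Finf] [Algebra (Polynomial Fq) Finf] {n : ℕ}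
    (D : InftySetup Fq Finf) (μ : (Fin n → Finf) → ℝ)
    (lam : Fin n → (Fin n → Finf)) : Prop :=
  (∀ x ∈ LambdaSet Fq Finf n, ∃! c : Fin n → Polynomial Fq,
      x = ∑ j, algebraMap (Polynomial Fq) Finf (c j) • lam j) ∧
  (Monotone fun i => μ (lam i)) ∧
  (∀ x : Fin n → Finf, μ (∑ i, x i • lam i) = ⨆ i, D.v (x i) * μ (lam i))

/-- Condition (ii): for each `i`, `λ_i ∉ Λ_{i-1}` and `λ_i` has the smallest norm among
`Λ ∖ Λ_{i-1}`. -/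
def CondII (Fq : Type*) [Field Fq] [Fintype Fq]
    {Finf : Type*} [Field Finf] [Algebra (Polynomial Fq) Finf] {n : ℕ}
    (μ : (Fin n → Finf) → ℝ) (lam : Fin n → (Fin n → Finf)) : Prop :=
  ∀ i : Fin n, lam i ∉ partialSpan Fq lam i ∧
    ∀ y ∈ LambdaSet Fq Finf n, y ∉ partialSpan Fq lam i → μ (lam i) ≤ μ y

section Helpers

variable {Fq : Type*} [Field Fq] [Fintype Fq]
variable {Finf : Type*} [Field Finf] [Algebra (Polynomial Fq) Finf]

namespace InftySetup

variable (D : InftySetup Fq Finf)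

lemma v_nonneg (x : Finf) : 0 ≤ D.v x := by
  rcases eq_or_ne x 0 with h | h
  · simp [h, D.v_zero]
  · exact (D.v_pos x h).le

lemma v_one : D.v 1 = 1 := by
  have h := D.v_mul 1 1
  rw [one_mul] at h
  have h1 := D.v_pos 1 one_ne_zero
  nlinarith

lemma v_neg (x : Finf) : D.v (-x) = D.v x := by
  have hm : D.v (-1 : Finf) = 1 := by
    have h := D.v_mul (-1 : Finf) (-1)
    rw [neg_mul_neg, one_mul, D.v_one] at h
    have h1 := D.v_pos (-1 : Finf) (by norm_num)
    nlinarith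
  rw [← neg_one_mul, D.v_mul, hm, one_mul]

include D in
lemma alg_ne_zero (a : Polynomial Fq) (ha : a ≠ 0) :
    algebraMap (Polynomial Fq) Finf a ≠ 0 := by
  intro h
  have h1 := D.v_poly a ha
  rw [h, D.v_zero] at h1
  have hq : (0:ℝ) < (Fintype.card Fq : ℝ) := by exact_mod_cast Fintype.card_pos
  have : (0:ℝ) < (Fintype.card Fq : ℝ) ^ a.natDegree := pow_pos hq _
  linarith

include D in
lemma alg_injective : Function.Injective (algebraMap (Polynomial Fq) Finf) := by
  intro a b h
  by_contra hne
  exact D.alg_ne_zero (a - b) (sub_ne_zero.mpr hne) (by rw [map_sub, h, sub_self])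

include D in
lemma v_alg_ge_one (a : Polynomial Fq) (ha : a ≠ 0) :
    1 ≤ D.v (algebraMap (Polynomial Fq) Finf a) := by
  rw [D.v_poly a ha]
  have hq : (1:ℝ) ≤ (Fintype.card Fq : ℝ) := by exact_mod_cast Fintype.card_pos
  exact one_le_pow₀ hq

variable {n : ℕ} {μ : (Fin n → Finf) → ℝ}

lemma mu_zero (hμ : D.IsNorm μ) : μ 0 = 0 := by
  have h := hμ.1 0 0
  rw [zero_smul, D.v_zero, zero_mul] at h
  exact h

lemma mu_nonneg (hμ : D.IsNorm μ) (x : Fin n → Finf) : 0 ≤ μ x := by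
  rcases eq_or_ne x 0 with h | h
  · rw [h, D.mu_zero hμ]
  · exact (hμ.2.2 x h).le

lemma mu_neg (hμ : D.IsNorm μ) (x : Fin n → Finf) : μ (-x) = μ x := by
  have h := hμ.1 (-1 : Finf) x
  rw [neg_one_smul] at h
  rw [h, D.v_neg, D.v_one, one_mul]

lemma mu_sum_le (hμ : D.IsNorm μ) {ι : Type*} (s : Finset ι) (f : ι → Fin n → Finf)
    (B : ℝ) (hB : 0 ≤ B) (h : ∀ i ∈ s, μ (f i) ≤ B) : μ (∑ i ∈ s, f i) ≤ B := by
  classical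
  induction s using Finset.induction_on with
  | empty => simpa [D.mu_zero hμ] using hB
  | insert _ _ hx ih =>
    rename_i a s'
    rw [Finset.sum_insert hx]
    refine le_trans (hμ.2.1 _ _) (max_le (h a (Finset.mem_insert_self a s')) ?_)
    exact ih fun i hi => h i (Finset.mem_insert_of_mem hi)

lemma mu_sum_lt (hμ : D.IsNorm μ) {ι : Type*} (s : Finset ι) (f : ι → Fin n → Finf)
    (B : ℝ) (hB : 0 < B) (h : ∀ i ∈ s, μ (f i) < B) : μ (∑ i ∈ s, f i) < B := by
  classical
  induction s using Finset.induction_on with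
  | empty => simpa [D.mu_zero hμ] using hB
  | insert _ _ hx ih =>
    rename_i a s'
    rw [Finset.sum_insert hx]
    refine lt_of_le_of_lt (hμ.2.1 _ _) (max_lt (h a (Finset.mem_insert_self a s')) ?_)
    exact ih fun i hi => h i (Finset.mem_insert_of_mem hi)

lemma mu_le_add (hμ : D.IsNorm μ) (x y : Fin n → Finf) (h : μ y < μ x) :
    μ x ≤ μ (x + y) := by
  have h2 : μ x ≤ max (μ (x + y)) (μ (-y)) := by
    have := hμ.2.1 (x + y) (-y)
    simpa using this
  rw [D.mu_neg hμ] at h2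
  rcases max_cases (μ (x+y)) (μ y) with ⟨he, _⟩ | ⟨he, _⟩
  · rwa [he] at h2
  · rw [he] at h2; linarith

end InftySetup

section SupHelpers

lemma fin_le_ciSup {n : ℕ} (f : Fin n → ℝ) (j : Fin n) : f j ≤ ⨆ i, f i :=
  le_ciSup (Set.finite_range f).bddAbove j

lemma fin_ciSup_lt {n : ℕ} [Nonempty (Fin n)] (f : Fin n → ℝ) (B : ℝ)
    (h : ∀ i, f i < B) : (⨆ i, f i) < B := by
  obtain ⟨k, _, hk⟩ := Finset.exists_max_image Finset.univ f ⟨Classical.arbitrary _, Finset.mem_univ _⟩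
  exact lt_of_le_of_lt (ciSup_le fun j => hk j (Finset.mem_univ j)) (h k)

lemma fin_exists_max_attain {n : ℕ} [Nonempty (Fin n)] (f : Fin n → ℝ) :
    ∃ k : Fin n, f k = (⨆ i, f i) ∧ ∀ j, k < j → f j < (⨆ i, f i) := by
  classical
  set S := ⨆ i, f i with hS
  obtain ⟨m, _, hm⟩ := Finset.exists_max_image Finset.univ f ⟨Classical.arbitrary _, Finset.mem_univ _⟩
  have hmS : f m = S :=
    le_antisymm (fin_le_ciSup f m) (ciSup_le fun j => hm j (Finset.mem_univ j))
  set s : Finset (Fin n) := Finset.univ.filter (fun j => f j = S) with hs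
  have hsne : s.Nonempty := ⟨m, by simp [hs, hmS]⟩
  refine ⟨s.max' hsne, ?_, ?_⟩
  · have := s.max'_mem hsne
    simpa [hs] using this
  · intro j hj
    have hjs : j ∉ s := fun hjm => absurd (Finset.le_max' s j hjm) (not_le.mpr hj)
    have hne : f j ≠ S := by simpa [hs] using hjs
    exact lt_of_le_of_ne (fin_le_ciSup f j) hne

end SupHelpers

section LambdaHelpers

variable {n : ℕ}

lemma lambda_sum_mem (lam : Fin n → (Fin n → Finf)) (hlam : ∀ i, lam i ∈ LambdaSet Fq Finf n)
    (c : Fin n → Polynomial Fq) :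
    (∑ j, algebraMap (Polynomial Fq) Finf (c j) • lam j) ∈ LambdaSet Fq Finf n := by
  intro i
  choose b hb using fun j => hlam j i
  refine ⟨∑ j, c j * b j, ?_⟩
  rw [Finset.sum_apply]
  rw [map_sum]
  refine Finset.sum_congr rfl fun j _ => ?_
  rw [Pi.smul_apply, smul_eq_mul, hb j, map_mul]

lemma lambda_sub_mem {x y : Fin n → Finf} (hx : x ∈ LambdaSet Fq Finf n)
    (hy : y ∈ LambdaSet Fq Finf n) : x - y ∈ LambdaSet Fq Finf n := by
  intro i
  obtain ⟨a, ha⟩ := hx i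
  obtain ⟨b, hb⟩ := hy i
  exact ⟨a - b, by rw [Pi.sub_apply, ha, hb, map_sub]⟩

lemma lambda_add_mem {x y : Fin n → Finf} (hx : x ∈ LambdaSet Fq Finf n)
    (hy : y ∈ LambdaSet Fq Finf n) : x + y ∈ LambdaSet Fq Finf n := by
  intro i
  obtain ⟨a, ha⟩ := hx i
  obtain ⟨b, hb⟩ := hy i
  exact ⟨a + b, by rw [Pi.add_apply, ha, hb, map_add]⟩

end LambdaHelpers

section CondIIHelpers

variable {n : ℕ} (D : InftySetup Fq Finf) {μ : (Fin n → Finf) → ℝ}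
  {lam : Fin n → (Fin n → Finf)}

lemma condII_lam_ne (h2 : CondII Fq μ lam) (i : Fin n) : lam i ≠ 0 := by
  intro h
  exact (h2 i).1 ⟨0, fun j _ => rfl, by simp [h]⟩

lemma condII_mono (hlam : ∀ i, lam i ∈ LambdaSet Fq Finf n) (h2 : CondII Fq μ lam)
    (i j : Fin n) (hij : i ≤ j) : μ (lam i) ≤ μ (lam j) := by
  refine (h2 i).2 (lam j) (hlam j) ?_
  rintro ⟨c, hc0, hc⟩
  exact (h2 j).1 ⟨c, fun k hk => hc0 k (fun hki => hk (lt_of_lt_of_le hki hij)), hc⟩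

/-- The key lemma: `μ(λ_i + w) ≥ μ(λ_i)` for any `F_∞`-combination `w` of the `λ_j`, `j < i`. -/
lemma condII_key (hμ : D.IsNorm μ) (hlam : ∀ i, lam i ∈ LambdaSet Fq Finf n)
    (h2 : CondII Fq μ lam) (i : Fin n) (x : Fin n → Finf) (hx : ∀ j, ¬ j < i → x j = 0) :
    μ (lam i) ≤ μ (lam i + ∑ j, x j • lam j) := by
  classical
  have hpos : ∀ j, 0 < μ (lam j) := fun j => hμ.2.2 _ (condII_lam_ne h2 j)
  choose a ha using fun j => D.poly_dense (x j)
  set a' : Fin n → Polynomial Fq := fun j => if j < i then a j else 0 with ha'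
  have hra : ∀ j, D.v (x j - algebraMap (Polynomial Fq) Finf (a' j)) < 1 := by
    intro j
    by_cases hji : j < i
    · simpa [ha', hji] using ha j
    · simp [ha', hji, hx j hji, D.v_zero]
  set lam' := lam i + ∑ j, algebraMap (Polynomial Fq) Finf (a' j) • lam j with hlam'
  have hmem : lam' ∈ LambdaSet Fq Finf n :=
    lambda_add_mem (hlam i) (lambda_sum_mem lam hlam a')
  have hnot : lam' ∉ partialSpan Fq lam i := by
    rintro ⟨c, hc0, hc⟩
    refine (h2 i).1 ⟨fun j => c j - a' j, ?_, ?_⟩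
    · intro j hj
      have hcj := hc0 j hj
      simp [ha', hj, hcj]
    · have : lam i = lam' - ∑ j, algebraMap (Polynomial Fq) Finf (a' j) • lam j := by
        rw [hlam']; abel
      rw [this, hc, ← Finset.sum_sub_distrib]
      refine Finset.sum_congr rfl fun j _ => ?_
      rw [map_sub, sub_smul]
  have hmin : μ (lam i) ≤ μ lam' := (h2 i).2 lam' hmem hnot
  -- lam' = (lam i + ∑ x j • lam j) + ∑ (alg a' j - x j) • lam j
  have hdec : lam' = (lam i + ∑ j, x j • lam j)
      + ∑ j, (algebraMap (Polynomial Fq) Finf (a' j) - x j) • lam j := by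
    rw [hlam', add_assoc, ← Finset.sum_add_distrib]
    congr 1
    refine Finset.sum_congr rfl fun j _ => ?_
    rw [← add_smul]
    ring_nf
  have hrest : μ (∑ j, (algebraMap (Polynomial Fq) Finf (a' j) - x j) • lam j) < μ (lam i) := by
    refine D.mu_sum_lt hμ _ _ _ (hpos i) fun j _ => ?_
    rw [hμ.1]
    have hv : D.v (algebraMap (Polynomial Fq) Finf (a' j) - x j) < 1 := by
      have := hra j
      rw [← D.v_neg]
      simpa [neg_sub] using this
    by_cases hji : j < i
    · have hmj : μ (lam j) ≤ μ (lam i) := condII_mono hlam h2 j i hji.le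
      exact lt_of_lt_of_le (mul_lt_of_lt_one_left (hpos j) hv) hmj
    · have : algebraMap (Polynomial Fq) Finf (a' j) - x j = 0 := by
        simp [ha', hji, hx j hji]
      rw [this, D.v_zero, zero_mul]
      exact hpos i
  by_contra hcon
  push_neg at hcon
  have h1 : μ lam' ≤ max (μ (lam i + ∑ j, x j • lam j))
      (μ (∑ j, (algebraMap (Polynomial Fq) Finf (a' j) - x j) • lam j)) := by
    rw [hdec]; exact hμ.2.1 _ _
  rcases max_cases (μ (lam i + ∑ j, x j • lam j))
      (μ (∑ j, (algebraMap (Polynomial Fq) Finf (a' j) - x j) • lam j)) with ⟨he, _⟩ | ⟨he, _⟩ <;>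
    rw [he] at h1 <;> linarith

/-- Orthogonality from condition (ii). -/
lemma condII_orth (hn : 1 ≤ n) (hμ : D.IsNorm μ) (hlam : ∀ i, lam i ∈ LambdaSet Fq Finf n)
    (h2 : CondII Fq μ lam) (x : Fin n → Finf) :
    μ (∑ i, x i • lam i) = ⨆ i, D.v (x i) * μ (lam i) := by
  classical
  haveI : Nonempty (Fin n) := ⟨⟨0, hn⟩⟩
  have hpos : ∀ j, 0 < μ (lam j) := fun j => hμ.2.2 _ (condII_lam_ne h2 j)
  set f : Fin n → ℝ := fun i => D.v (x i) * μ (lam i) with hf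
  have hf0 : ∀ i, 0 ≤ f i := fun i => mul_nonneg (D.v_nonneg _) (hpos i).le
  have hterm : ∀ i, μ (x i • lam i) = f i := fun i => hμ.1 (x i) (lam i)
  have hSnn : 0 ≤ ⨆ i, f i := le_trans (hf0 _) (fin_le_ciSup f (Classical.arbitrary _))
  refine le_antisymm (D.mu_sum_le hμ _ _ _ hSnn fun i _ => (hterm i) ▸ fin_le_ciSup f i) ?_
  rcases le_or_gt (⨆ i, f i) 0 with hS | hS
  · exact le_trans hS (D.mu_nonneg hμ _)
  obtain ⟨k, hkS, hklt⟩ := fin_exists_max_attain f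
  have hxk : x k ≠ 0 := by
    intro h
    rw [hf] at hkS
    simp only [h, D.v_zero, zero_mul] at hkS
    linarith [hkS ▸ hS]
  set y : Fin n → Finf := fun j => if j < k then x j / x k else 0 with hy
  have hkey := condII_key D hμ hlam h2 k y (fun j hj => by simp [hy, hj])
  set A : Fin n → Finf → _ := fun _ => id with hAdummy
  have hAeq : x k • (lam k + ∑ j, y j • lam j) = ∑ j, (if j ≤ k then x j else 0) • lam j := by
    rw [smul_add, Finset.smul_sum]
    have h1 : x k • lam k = ∑ j, (if j = k then x k else (0:Finf)) • lam j := by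
      rw [Finset.sum_eq_single k]
      · simp
      · intro b _ hb; simp [hb]
      · intro h; exact absurd (Finset.mem_univ k) h
    rw [h1, ← Finset.sum_add_distrib]
    refine Finset.sum_congr rfl fun j _ => ?_
    rw [smul_smul, ← add_smul]
    congr 1
    rcases lt_trichotomy j k with hjk | hjk | hjk
    · simp [hy, hjk, hjk.ne, hjk.le, mul_div_cancel₀ _ hxk]
    · simp [hjk, hy]
    · simp [hy, hjk.ne', not_lt_of_gt hjk, not_le_of_gt hjk]
  have hA : ⨆ i, f i ≤ μ (∑ j, (if j ≤ k then x j else 0) • lam j) := by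
    rw [← hAeq, hμ.1, ← hkS]
    exact mul_le_mul_of_nonneg_left hkey (D.v_nonneg _)
  have hB : μ (∑ j, (if j ≤ k then (0:Finf) else x j) • lam j) < ⨆ i, f i := by
    refine D.mu_sum_lt hμ _ _ _ hS fun j _ => ?_
    by_cases hjk : j ≤ k
    · simp only [hjk, if_true, zero_smul]
      rw [D.mu_zero hμ]; exact hS
    · simp only [hjk, if_false]
      rw [hterm j]
      exact hklt j (lt_of_not_ge hjk)
  have hsplit : ∑ i, x i • lam i = (∑ j, (if j ≤ k then x j else 0) • lam j)
      + ∑ j, (if j ≤ k then (0:Finf) else x j) • lam j := by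
    rw [← Finset.sum_add_distrib]
    refine Finset.sum_congr rfl fun j _ => ?_
    rw [← add_smul]
    by_cases hjk : j ≤ k <;> simp [hjk]
  rw [hsplit]
  exact le_trans hA (D.mu_le_add hμ _ _ (lt_of_lt_of_le hB hA))

lemma condII_linIndep (hn : 1 ≤ n) (hμ : D.IsNorm μ)
    (hlam : ∀ i, lam i ∈ LambdaSet Fq Finf n) (h2 : CondII Fq μ lam) :
    LinearIndependent Finf lam := by
  rw [Fintype.linearIndependent_iff]
  intro g hg i
  have h0 : μ (∑ i, g i • lam i) = 0 := by rw [hg, D.mu_zero hμ]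
  rw [condII_orth D hn hμ hlam h2 g] at h0
  by_contra hgi
  have h1 : 0 < D.v (g i) * μ (lam i) :=
    mul_pos (D.v_pos _ hgi) (hμ.2.2 _ (condII_lam_ne h2 i))
  have h2' := fin_le_ciSup (fun i => D.v (g i) * μ (lam i)) i
  rw [h0] at h2'
  linarith

end CondIIHelpers

end Helpers
/-- Let `μ` be a norm on `F_∞^n` and `λ_1, …, λ_n ∈ Λ = A^n`.  Then
conditions (i) and (ii) are equivalent. -/
theorem statement5 {Fq : Type*} [Field Fq] [Fintype Fq]
    {Finf : Type*} [Field Finf] [Algebra (Polynomial Fq) Finf]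
    (D : InftySetup Fq Finf) (n : ℕ) (hn : 1 ≤ n)
    (μ : (Fin n → Finf) → ℝ) (hμ : D.IsNorm μ)
    (lam : Fin n → (Fin n → Finf)) (hlam : ∀ i, lam i ∈ LambdaSet Fq Finf n) :
    CondI D μ lam ↔ CondII Fq μ lam := by
  classical
  haveI : Nonempty (Fin n) := ⟨⟨0, hn⟩⟩
  constructor
  · rintro ⟨hbasis, hmono, horth⟩
    have hrep : ∀ i : Fin n, lam i =
        ∑ j, algebraMap (Polynomial Fq) Finf ((Pi.single i (1:Polynomial Fq) : Fin n → Polynomial Fq) j) • lam j := by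
      intro i
      rw [Finset.sum_eq_single i]
      · simp
      · intro b _ hb; simp [Pi.single_eq_of_ne hb]
      · intro h; exact absurd (Finset.mem_univ i) h
    have hne0 : ∀ j, lam j ≠ 0 := by
      intro j h0
      obtain ⟨c, hc, hcu⟩ := hbasis 0 (fun i => ⟨0, by simp⟩)
      have e1 : (0 : Fin n → Finf) =
          ∑ k, algebraMap (Polynomial Fq) Finf ((0 : Fin n → Polynomial Fq) k) • lam k := by simp
      have e2 : (0 : Fin n → Finf) =
          ∑ k, algebraMap (Polynomial Fq) Finf ((Pi.single j (1:Polynomial Fq) : Fin n → Polynomial Fq) k) • lam k := by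
        rw [← hrep j, h0]
      have := (hcu _ e2).trans (hcu _ e1).symm
      have h1 := congrFun this j
      simp at h1
    intro i
    constructor
    · rintro ⟨c, hc0, hc⟩
      have hcu := (hbasis (lam i) (hlam i)).unique hc (hrep i)
      have h1 := congrFun hcu i
      rw [hc0 i (lt_irrefl i)] at h1
      simp at h1
    · intro y hy hynot
      obtain ⟨c, hc, _⟩ := hbasis y hy
      have hex : ∃ j, ¬ j < i ∧ c j ≠ 0 := by
        by_contra hcon
        push_neg at hcon
        exact hynot ⟨c, fun j hj => hcon j (le_of_not_gt hj), hc⟩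
      obtain ⟨j, hji, hcj⟩ := hex
      have hpj : 0 < μ (lam j) := hμ.2.2 _ (hne0 j)
      have h1 : μ (lam i) ≤ μ (lam j) := hmono (le_of_not_gt hji)
      have h2 : μ (lam j) ≤ D.v (algebraMap (Polynomial Fq) Finf (c j)) * μ (lam j) := by
        nth_rewrite 1 [← one_mul (μ (lam j))]
        exact mul_le_mul_of_nonneg_right (D.v_alg_ge_one _ hcj) hpj.le
      have h3 := fin_le_ciSup
        (fun k => D.v (algebraMap (Polynomial Fq) Finf (c k)) * μ (lam k)) j
      rw [hc, horth (fun k => algebraMap (Polynomial Fq) Finf (c k))]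
      exact le_trans h1 (le_trans h2 h3)
  · intro h2
    have hli := condII_linIndep D hn hμ hlam h2
    have hcard : Fintype.card (Fin n) = Module.finrank Finf (Fin n → Finf) := by simp
    set B := basisOfLinearIndependentOfCardEqFinrank hli hcard with hBdef
    have hB : ⇑B = lam := coe_basisOfLinearIndependentOfCardEqFinrank hli hcard
    have huniq : ∀ c c' : Fin n → Polynomial Fq,
        (∑ j, algebraMap (Polynomial Fq) Finf (c j) • lam j)
          = ∑ j, algebraMap (Polynomial Fq) Finf (c' j) • lam j → c = c' := by
      intro c c' h
      have hz : ∑ j, (algebraMap (Polynomial Fq) Finf (c j)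
          - algebraMap (Polynomial Fq) Finf (c' j)) • lam j = 0 := by
        simp only [sub_smul, Finset.sum_sub_distrib, h, sub_self]
      have := Fintype.linearIndependent_iff.mp hli _ hz
      funext j
      exact D.alg_injective (sub_eq_zero.mp (this j))
    refine ⟨?_, fun i j hij => condII_mono hlam h2 i j hij, condII_orth D hn hμ hlam h2⟩
    intro x hx
    have hx' : x = ∑ j, B.repr x j • lam j := by
      conv_lhs => rw [← B.sum_repr x]
      simp only [hB]
    set xc : Fin n → Finf := fun j => B.repr x j with hxc
    choose a haa using fun j => D.poly_dense (xc j)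
    set r : Fin n → Finf := fun j => xc j - algebraMap (Polynomial Fq) Finf (a j) with hrdef
    have hr0 : ∀ j, r j = 0 := by
      by_contra hcon
      push_neg at hcon
      obtain ⟨j0, hj0⟩ := hcon
      set s : Finset (Fin n) := Finset.univ.filter (fun j => r j ≠ 0) with hs
      have hsne : s.Nonempty := ⟨j0, by simp [hs, hj0]⟩
      set k := s.max' hsne with hk
      have hrk : r k ≠ 0 := by have := s.max'_mem hsne; simpa [hs] using this
      have hrgt : ∀ j, k < j → r j = 0 := by
        intro j hj
        by_contra hrj
        exact absurd (Finset.le_max' s j (by simp [hs, hrj])) (not_le.mpr hj)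
      set y : Fin n → Finf := ∑ j, r j • lam j with hydef
      have hyeq : y = x - ∑ j, algebraMap (Polynomial Fq) Finf (a j) • lam j := by
        rw [hydef, hx', ← Finset.sum_sub_distrib]
        refine Finset.sum_congr rfl fun j _ => ?_
        rw [← sub_smul]
      have hymem : y ∈ LambdaSet Fq Finf n := by
        rw [hyeq]
        exact lambda_sub_mem hx (lambda_sum_mem lam hlam a)
      have hynot : y ∉ partialSpan Fq lam k := by
        rintro ⟨c, hc0, hcs⟩
        have hz : ∑ j, (r j - algebraMap (Polynomial Fq) Finf (c j)) • lam j = 0 := by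
          simp only [sub_smul, Finset.sum_sub_distrib, ← hydef, ← hcs, sub_self]
        have hco := Fintype.linearIndependent_iff.mp hli _ hz
        have := sub_eq_zero.mp (hco k)
        rw [hc0 k (lt_irrefl k)] at this
        simp at this
        exact hrk this
      have hle := (h2 k).2 y hymem hynot
      have hpos : ∀ j, 0 < μ (lam j) := fun j => hμ.2.2 _ (condII_lam_ne h2 j)
      have hlt : μ y < μ (lam k) := by
        rw [hydef, condII_orth D hn hμ hlam h2 r]
        refine fin_ciSup_lt _ _ fun j => ?_
        rcases lt_or_ge k j with hkj | hjk
        · rw [hrgt j hkj, D.v_zero, zero_mul]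
          exact hpos k
        · have hv : D.v (r j) < 1 := haa j
          exact lt_of_lt_of_le (mul_lt_of_lt_one_left (hpos j) hv)
            (condII_mono hlam h2 j k hjk)
      linarith
    have hxa : x = ∑ j, algebraMap (Polynomial Fq) Finf (a j) • lam j := by
      rw [hx']
      refine Finset.sum_congr rfl fun j _ => ?_
      exact congrArg (· • lam j) (sub_eq_zero.mp (hr0 j))
    exact ⟨a, hxa, fun c' hc' => huniq c' a (hc'.symm.trans hxa)⟩
end
end

section
/- For all integers r ≥ 1, n ≥ 0 and every s ∈ ℝ_{>0}^n, the restriction of ε^{r,n}_s to ℝ_{≥0} is a continuous, strictly increasing bijection from ℝ_{≥0} onto ℝ_{≥0}. -/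
noncomputable section

open scoped BigOperators

open Classical in
/-- The absolute value `|y| = q^{deg y}` (and `|0| = 0`) on `A = F_q[T]`. -/
def absA (Fq : Type) [Field Fq] [Fintype Fq] (y : Polynomial Fq) : ℝ :=
  if y = 0 then 0 else (Fintype.card Fq : ℝ) ^ y.natDegree

/-- `ε^{r,n}_s(x) = x + Σ_{y ∈ A^n, y ≠ 0} max(x − max_{1≤i≤n} |y_i|^r·s_i, 0)`.
(For each `x` only finitely many summands are nonzero, so the `tsum` agrees with the
intended sum; the inner `⨆` over the finite type `Fin n` is the maximum.) -/
def epsFun (Fq : Type) [Field Fq] [Fintype Fq] (r n : ℕ) (s : Fin n → ℝ) (x : ℝ) : ℝ :=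
  x + ∑' y : {y : Fin n → Polynomial Fq // y ≠ 0},
      max (x - ⨆ i : Fin n, (absA Fq (y.1 i)) ^ r * s i) 0

/-- `δ^{r,n}(s) = ((q−1)/(q^{r+n}−1))·Σ_{i=1}^n q^{n−i}·ε^{r,i−1}_{(s_1,…,s_{i−1})}(s_i)`. -/
def deltaFun (Fq : Type) [Field Fq] [Fintype Fq] (r n : ℕ) (s : Fin n → ℝ) : ℝ :=
  ((Fintype.card Fq : ℝ) - 1) / ((Fintype.card Fq : ℝ) ^ (r + n) - 1) *
    ∑ i : Fin n, (Fintype.card Fq : ℝ) ^ (n - 1 - (i : ℕ)) *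
      epsFun Fq r i (fun j : Fin (i : ℕ) => s (Fin.castLE i.isLt.le j)) (s i)

/-- `ε̂^{r,n}_s(x) = ε^{r,n}_s(x) − δ^{r,n}(s)`. -/
def epsHat (Fq : Type) [Field Fq] [Fintype Fq] (r n : ℕ) (s : Fin n → ℝ) (x : ℝ) : ℝ :=
  epsFun Fq r n s x - deltaFun Fq r n s


open scoped BigOperators

section Aux

variable (Fq : Type) [Field Fq] [Fintype Fq]

lemma absA_nonneg' (p : Polynomial Fq) : 0 ≤ absA Fq p := by
  unfold absA
  split <;> positivity

lemma one_le_absA' {p : Polynomial Fq} (hp : p ≠ 0) : 1 ≤ absA Fq p := by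
  unfold absA
  rw [if_neg hp]
  exact one_le_pow₀ (by exact_mod_cast Fintype.card_pos)

lemma finite_natDegree_le' (D : ℕ) : {p : Polynomial Fq | p.natDegree ≤ D}.Finite := by
  have h : {p : Polynomial Fq | p.natDegree ≤ D} ⊆
      (fun f : Fin (D + 1) → Fq =>
        ∑ i : Fin (D + 1), Polynomial.monomial (i : ℕ) (f i)) '' Set.univ := by
    intro p hp
    refine ⟨fun i => p.coeff i, Set.mem_univ _, ?_⟩
    show (∑ i : Fin (D + 1), Polynomial.monomial (i : ℕ) (p.coeff i)) = p
    rw [Fin.sum_univ_eq_sum_range (fun i => Polynomial.monomial i (p.coeff i))]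
    exact (p.as_sum_range' (D + 1) (Nat.lt_succ_of_le hp)).symm
  exact Set.Finite.subset (Set.finite_univ.image _) h

lemma finite_absA_lt' (C : ℝ) : {p : Polynomial Fq | absA Fq p < C}.Finite := by
  apply (finite_natDegree_le' Fq ⌊C⌋₊).subset
  intro p hp
  simp only [Set.mem_setOf_eq] at hp ⊢
  by_cases h0 : p = 0
  · simp [h0]
  · rw [absA, if_neg h0] at hp
    have hq : 1 < Fintype.card Fq := Fintype.one_lt_card
    have h1 : (p.natDegree : ℝ) < (Fintype.card Fq : ℝ) ^ p.natDegree := by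
      exact_mod_cast Nat.lt_pow_self (n := p.natDegree) hq
    exact Nat.le_floor (le_of_lt (h1.trans hp))

variable (r n : ℕ) (s : Fin n → ℝ)

def cval (y : Fin n → Polynomial Fq) : ℝ := ⨆ i : Fin n, (absA Fq (y i)) ^ r * s i

lemma epsFun_eq_tsum (x : ℝ) :
    epsFun Fq r n s x = x + ∑' y : {y : Fin n → Polynomial Fq // y ≠ 0},
      max (x - cval Fq r n s y.1) 0 := rfl

lemma finite_cval_lt (hr : 1 ≤ r) (hs : ∀ i, 0 < s i) (B : ℝ) :
    {y : Fin n → Polynomial Fq | cval Fq r n s y < B}.Finite := by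
  rcases isEmpty_or_nonempty (Fin n) with h | h
  · exact Set.toFinite _
  · apply Set.Finite.subset (Set.Finite.pi (fun i => finite_absA_lt' Fq (B / s i)))
    intro y hy
    simp only [Set.mem_setOf_eq] at hy
    rw [Set.mem_univ_pi]
    intro i
    simp only [Set.mem_setOf_eq]
    have hles : (absA Fq (y i)) ^ r * s i ≤ cval Fq r n s y := by
      exact le_ciSup (f := fun i : Fin n => (absA Fq (y i)) ^ r * s i)
        (Set.Finite.bddAbove (Set.finite_range _)) i
    have h2 : (absA Fq (y i)) ^ r < B / s i :=
      (lt_div_iff₀ (hs i)).2 (lt_of_le_of_lt hles hy)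
    have h3 : absA Fq (y i) ≤ (absA Fq (y i)) ^ r := by
      by_cases h0 : y i = 0
      · simp [absA, h0, zero_pow (by omega : r ≠ 0)]
      · exact le_self_pow₀ (one_le_absA' Fq h0) (by omega)
    exact lt_of_le_of_lt h3 h2

/-- The finite set of relevant `y` below a bound `B`. -/
def relFinset (hr : 1 ≤ r) (hs : ∀ i, 0 < s i) (B : ℝ) :
    Finset {y : Fin n → Polynomial Fq // y ≠ 0} :=
  (Set.Finite.preimage (Subtype.val_injective.injOn) (finite_cval_lt Fq r n s hr hs B)).toFinset

lemma epsFun_eq_finsum (hr : 1 ≤ r) (hs : ∀ i, 0 < s i) (B : ℝ) {x : ℝ} (hx : x ≤ B) :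
    epsFun Fq r n s x =
      x + ∑ y ∈ relFinset Fq r n s hr hs B, max (x - cval Fq r n s y.1) 0 := by
  rw [epsFun_eq_tsum]
  congr 1
  apply tsum_eq_sum
  intro y hy
  have : ¬ cval Fq r n s y.1 < B := by
    simpa [relFinset] using hy
  have hxc : x - cval Fq r n s y.1 ≤ 0 := by linarith [not_lt.1 this]
  exact max_eq_right hxc

lemma eps_strictMono (hr : 1 ≤ r) (hs : ∀ i, 0 < s i) : StrictMono (epsFun Fq r n s) := by
  intro x z hxz
  rw [epsFun_eq_finsum Fq r n s hr hs z hxz.le, epsFun_eq_finsum Fq r n s hr hs z le_rfl]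
  apply add_lt_add_of_lt_of_le hxz
  apply Finset.sum_le_sum
  intro y _
  exact max_le_max (by linarith) le_rfl

lemma eps_continuous (hr : 1 ≤ r) (hs : ∀ i, 0 < s i) : Continuous (epsFun Fq r n s) := by
  rw [continuous_iff_continuousAt]
  intro x
  have hg : Continuous (fun t : ℝ =>
      t + ∑ y ∈ relFinset Fq r n s hr hs (x + 1), max (t - cval Fq r n s y.1) 0) := by
    apply continuous_id.add
    apply continuous_finset_sum
    intro y _
    exact (continuous_id.sub continuous_const).max continuous_const
  apply hg.continuousAt.congr
  apply Filter.eventuallyEq_of_mem (Iio_mem_nhds (lt_add_one x))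
  intro t ht
  exact (epsFun_eq_finsum Fq r n s hr hs (x + 1) (le_of_lt ht)).symm

lemma eps_zero (hs : ∀ i, 0 < s i) : epsFun Fq r n s 0 = 0 := by
  rw [epsFun_eq_tsum, zero_add]
  have h : ∀ y : {y : Fin n → Polynomial Fq // y ≠ 0},
      max (0 - cval Fq r n s y.1) 0 = 0 := by
    intro y
    obtain ⟨i, hi⟩ := Function.ne_iff.1 y.2
    have h1 : 0 ≤ (absA Fq (y.1 i)) ^ r * s i :=
      mul_nonneg (pow_nonneg (absA_nonneg' Fq _) r) (hs i).le
    have h2 : (absA Fq (y.1 i)) ^ r * s i ≤ cval Fq r n s y.1 := by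
      exact le_ciSup (f := fun i : Fin n => (absA Fq (y.1 i)) ^ r * s i)
        (Set.Finite.bddAbove (Set.finite_range _)) i
    exact max_eq_right (by linarith)
  rw [tsum_congr h, tsum_zero]

lemma self_le_eps (x : ℝ) : x ≤ epsFun Fq r n s x := by
  rw [epsFun_eq_tsum]
  exact le_add_of_nonneg_right (tsum_nonneg fun y => le_max_right _ _)

end Aux

/-- For all integers `r ≥ 1`, `n ≥ 0` and every `s ∈ ℝ_{>0}^n`, the
restriction of `ε^{r,n}_s` to `ℝ_{≥0}` is a continuous, strictly increasing bijection from
`ℝ_{≥0}` onto `ℝ_{≥0}`. -/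
theorem statement7 (Fq : Type) [Field Fq] [Fintype Fq]
    (r n : ℕ) (hr : 1 ≤ r) (s : Fin n → ℝ) (hs : ∀ i, 0 < s i) :
    ContinuousOn (epsFun Fq r n s) (Set.Ici (0 : ℝ)) ∧
    StrictMonoOn (epsFun Fq r n s) (Set.Ici (0 : ℝ)) ∧
    Set.BijOn (epsFun Fq r n s) (Set.Ici (0 : ℝ)) (Set.Ici (0 : ℝ)) := by
  have hc := eps_continuous Fq r n s hr hs
  have hm := eps_strictMono Fq r n s hr hs
  refine ⟨hc.continuousOn, hm.strictMonoOn _, ?_, (hm.strictMonoOn _).injOn, ?_⟩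
  · intro x hx
    have : (0 : ℝ) ≤ x := hx
    exact le_trans this (self_le_eps Fq r n s x)
  · intro w hw
    have hw0 : (0 : ℝ) ≤ w := hw
    have hmem : w ∈ Set.Icc (epsFun Fq r n s 0) (epsFun Fq r n s w) := by
      rw [eps_zero Fq r n s hs]
      exact ⟨hw0, self_le_eps Fq r n s w⟩
    obtain ⟨x, hx, hxe⟩ := intermediate_value_Icc hw0 hc.continuousOn hmem
    exact ⟨x, hx.1, hxe⟩
end
end

section
/- Let r ≥ 1, n ≥ 0 and s = (s_1, …, s_{n+1}) ∈ ℝ_{>0}^{n+1} with s_i ≤ s_{i+1} for 1 ≤ i ≤ n. Then s'_i := ε̂^{r,1}_{s_1}(s_{i+1}) > 0 for 1 ≤ i ≤ n, and δ^{r,n+1}(s_1, …, s_{n+1}) = δ^{r,1}(s_1) + δ^{r+1,n}(s'_1, …, s'_n). -/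
noncomputable section

open scoped BigOperators

namespace S8

open Polynomial Function

variable {Fq : Type} [Field Fq] [Fintype Fq]

lemma one_lt_Q : (1 : ℝ) < (Fintype.card Fq : ℝ) := by
  exact_mod_cast Fintype.one_lt_card

lemma Q_pos : (0 : ℝ) < (Fintype.card Fq : ℝ) := lt_trans one_pos one_lt_Q

lemma absA_nonneg (y : Polynomial Fq) : 0 ≤ absA Fq y := by
  unfold absA; split
  · exact le_refl 0
  · positivity

lemma absA_zero : absA Fq 0 = 0 := if_pos rfl

lemma one_le_absA {y : Polynomial Fq} (hy : y ≠ 0) : 1 ≤ absA Fq y := by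
  unfold absA
  rw [if_neg hy]
  exact one_le_pow₀ one_lt_Q.le

lemma max_pos_of_ne {z : ℝ} (h : max z 0 ≠ 0) : 0 < z := by
  rcases le_or_gt z 0 with h' | h'
  · exact absurd (max_eq_right h') h
  · exact h'

lemma finite_natDegree_le (D : ℕ) : {p : Polynomial Fq | p.natDegree ≤ D}.Finite := by
  have hinj : Set.InjOn (fun p : Polynomial Fq => fun i : Fin (D + 1) => p.coeff i)
      {p : Polynomial Fq | p.natDegree ≤ D} := by
    intro p hp q hq h
    ext m
    rcases le_or_gt m D with hm | hm
    · exact congrFun h ⟨m, by omega⟩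
    · rw [Polynomial.coeff_eq_zero_of_natDegree_lt (lt_of_le_of_lt hp hm),
        Polynomial.coeff_eq_zero_of_natDegree_lt (lt_of_le_of_lt hq hm)]
  exact Set.Finite.of_finite_image (Set.toFinite _) hinj

lemma finite_absA_le (B : ℝ) : {p : Polynomial Fq | absA Fq p ≤ B}.Finite := by
  obtain ⟨D, hD⟩ := pow_unbounded_of_one_lt B (one_lt_Q (Fq := Fq))
  refine (finite_natDegree_le D).subset ?_
  intro p hp
  simp only [Set.mem_setOf_eq] at hp ⊢
  by_contra hlt
  push_neg at hlt
  have hp0 : p ≠ 0 := by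
    rintro rfl
    simp [Polynomial.natDegree_zero] at hlt
  have habs : absA Fq p = (Fintype.card Fq : ℝ) ^ p.natDegree := if_neg hp0
  have h1 : ((Fintype.card Fq : ℝ)) ^ D ≤ (Fintype.card Fq : ℝ) ^ p.natDegree :=
    pow_le_pow_right₀ one_lt_Q.le (by omega)
  rw [habs] at hp
  linarith

lemma absA_le_of {r : ℕ} (hr : 1 ≤ r) {c x : ℝ} (hc : 0 < c) {p : Polynomial Fq}
    (h : absA Fq p ^ r * c < x) : absA Fq p ≤ x / c := by
  have h2 : absA Fq p ^ r < x / c := (lt_div_iff₀ hc).2 h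
  rcases eq_or_ne p 0 with rfl | hp
  · rw [absA_zero]
    rw [absA_zero, zero_pow (by omega : r ≠ 0)] at h2
    linarith
  · calc absA Fq p ≤ absA Fq p ^ r := le_self_pow₀ (one_le_absA hp) (by omega)
      _ ≤ x / c := h2.le

lemma summable_of_absA_bound₁ {f : Polynomial Fq → ℝ} (B : ℝ)
    (h : ∀ p, f p ≠ 0 → absA Fq p ≤ B) : Summable f :=
  summable_of_finite_support ((finite_absA_le B).subset h)

lemma summable_of_absA_bound {n : ℕ} {f : (Fin n → Polynomial Fq) → ℝ} (B : Fin n → ℝ)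
    (h : ∀ y i, f y ≠ 0 → absA Fq (y i) ≤ B i) : Summable f := by
  apply summable_of_finite_support
  apply Set.Finite.subset (Set.Finite.pi (fun i => finite_absA_le (B i)))
  intro y hy
  exact fun i _ => h y i hy

lemma tsum_split_zero {β : Type*} [Zero β] (f : β → ℝ) (hf : Summable f) :
    ∑' y, f y = f 0 + ∑' y : {y : β // y ≠ 0}, f y := by
  classical
  have h2 : Function.support (fun z : β => if z = 0 then 0 else f z) ⊆ {y : β | y ≠ 0} := by
    intro z hz
    simp only [Function.mem_support] at hz
    intro hz0
    exact hz (if_pos hz0)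
  have h3 := tsum_subtype_eq_of_support_subset h2
  rw [hf.tsum_eq_add_tsum_ite 0]
  congr 1
  rw [← h3]
  exact tsum_congr fun y => if_neg y.2


/-! ### One-variable theory -/

def e1 (Fq : Type) [Field Fq] [Fintype Fq] (r : ℕ) (c t : ℝ) : ℝ :=
  ∑' y : Polynomial Fq, max (t - absA Fq y ^ r * c) 0

def dOne (Fq : Type) [Field Fq] [Fintype Fq] (r : ℕ) (c : ℝ) : ℝ :=
  ((Fintype.card Fq : ℝ) - 1) / ((Fintype.card Fq : ℝ) ^ (r + 1) - 1) * c

variable (Fq)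

lemma summable_e1 (r : ℕ) (hr : 1 ≤ r) {c : ℝ} (hc : 0 < c) (x : ℝ) :
    Summable (fun y : Polynomial Fq => max (x - absA Fq y ^ r * c) 0) := by
  apply summable_of_absA_bound₁ (x / c)
  intro p hp
  exact absA_le_of hr hc (by linarith [max_pos_of_ne hp])

lemma e1_mono (r : ℕ) (hr : 1 ≤ r) {c : ℝ} (hc : 0 < c) : Monotone (e1 Fq r c) := by
  intro a b hab
  exact Summable.tsum_le_tsum (fun y => max_le_max (by linarith) le_rfl)
    (summable_e1 Fq r hr hc a) (summable_e1 Fq r hr hc b)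

lemma e1_zero (r : ℕ) {c : ℝ} (hc : 0 < c) : e1 Fq r c 0 = 0 := by
  rw [e1]
  have h : ∀ y : Polynomial Fq, max (0 - absA Fq y ^ r * c) 0 = 0 := fun y =>
    max_eq_right (by nlinarith [absA_nonneg (Fq := Fq) y, pow_nonneg (absA_nonneg (Fq := Fq) y) r])
  rw [tsum_congr h, tsum_zero]

lemma e1_self (r : ℕ) (hr : 1 ≤ r) {c : ℝ} (hc : 0 < c) : e1 Fq r c c = c := by
  rw [e1, tsum_eq_single (0 : Polynomial Fq)]
  · rw [absA_zero, zero_pow (by omega : r ≠ 0), zero_mul, sub_zero]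
    exact max_eq_left hc.le
  · intro y hy
    refine max_eq_right ?_
    have h1 : 1 ≤ absA Fq y ^ r := one_le_pow₀ (one_le_absA hy)
    nlinarith

lemma e1_ge_self (r : ℕ) (hr : 1 ≤ r) {c : ℝ} (hc : 0 < c) {t : ℝ} (ht : 0 ≤ t) :
    t ≤ e1 Fq r c t := by
  have h0 : max (t - absA Fq (0 : Polynomial Fq) ^ r * c) 0 = t := by
    rw [absA_zero, zero_pow (by omega : r ≠ 0), zero_mul, sub_zero]
    exact max_eq_left ht
  calc t = max (t - absA Fq (0 : Polynomial Fq) ^ r * c) 0 := h0.symm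
    _ ≤ e1 Fq r c t := Summable.le_tsum (summable_e1 Fq r hr hc t) 0 fun y _ => le_max_right _ _

lemma SL (r : ℕ) (hr : 1 ≤ r) {c : ℝ} (hc : 0 < c) {M : ℝ} (hM : 0 ≤ M) (x : ℝ) :
    ∑' y : Polynomial Fq, max (x - max (absA Fq y ^ r * c) M) 0
      = max (e1 Fq r c x - e1 Fq r c M) 0 := by
  rcases le_or_gt x M with hxM | hMx
  · have h1 : ∀ y : Polynomial Fq, max (x - max (absA Fq y ^ r * c) M) 0 = 0 := fun y =>
      max_eq_right (by have := le_max_right (absA Fq y ^ r * c) M; linarith)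
    rw [tsum_congr h1, tsum_zero, eq_comm]
    exact max_eq_right (by have := e1_mono Fq r hr hc hxM; linarith)
  · have h1 : ∀ y : Polynomial Fq, max (x - max (absA Fq y ^ r * c) M) 0
        = max (x - absA Fq y ^ r * c) 0 - max (M - absA Fq y ^ r * c) 0 := by
      intro y
      rcases le_total (absA Fq y ^ r * c) M with h | h
      · rw [max_eq_right h, max_eq_left (by linarith : (0:ℝ) ≤ x - absA Fq y ^ r * c),
          max_eq_left (by linarith : (0:ℝ) ≤ M - absA Fq y ^ r * c),
          max_eq_left (by linarith : (0:ℝ) ≤ x - M)]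
        ring
      · rw [max_eq_left h, max_eq_right (by linarith : M - absA Fq y ^ r * c ≤ 0), sub_zero]
    rw [tsum_congr h1, Summable.tsum_sub (summable_e1 Fq r hr hc x) (summable_e1 Fq r hr hc M)]
    exact (max_eq_left (sub_nonneg.2 (e1_mono Fq r hr hc hMx.le))).symm

/-- The bijection `Fq × Fq[X] ≃ Fq[X]`, `(a, u) ↦ C a + u * X`. -/
def polyEquiv : Fq × Polynomial Fq ≃ Polynomial Fq where
  toFun p := Polynomial.C p.1 + p.2 * Polynomial.X
  invFun y := (y.coeff 0, y.divX)
  left_inv := by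
    rintro ⟨a, u⟩
    have h1 : (Polynomial.C a + u * Polynomial.X).coeff 0 = a := by
      simp [Polynomial.coeff_mul_X_zero]
    have h2 : (Polynomial.C a + u * Polynomial.X).divX = u := by
      have h := Polynomial.divX_mul_X_add (Polynomial.C a + u * Polynomial.X)
      rw [h1] at h
      have h3 : (Polynomial.C a + u * Polynomial.X).divX * Polynomial.X
          = u * Polynomial.X := by
        have := congrArg (fun p => p - Polynomial.C a) h
        simpa [add_sub_cancel_right, add_comm, add_sub_cancel] using this
      exact mul_right_cancel₀ Polynomial.X_ne_zero h3
    simp [h1, h2]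
  right_inv y := by
    have h := Polynomial.divX_mul_X_add y
    simpa [add_comm] using h

lemma polyEquiv_apply (a : Fq) (u : Polynomial Fq) :
    polyEquiv Fq (a, u) = Polynomial.C a + u * Polynomial.X := rfl

lemma absA_C_add_mul_X (a : Fq) {u : Polynomial Fq} (hu : u ≠ 0) :
    absA Fq (Polynomial.C a + u * Polynomial.X)
      = (Fintype.card Fq : ℝ) * absA Fq u := by
  have hux : (u * Polynomial.X).natDegree = u.natDegree + 1 := Polynomial.natDegree_mul_X hu
  have hdeg : (Polynomial.C a + u * Polynomial.X).natDegree = u.natDegree + 1 := by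
    rw [Polynomial.natDegree_add_eq_right_of_natDegree_lt, hux]
    rw [hux, Polynomial.natDegree_C]
    omega
  have hne : Polynomial.C a + u * Polynomial.X ≠ 0 := by
    intro h
    rw [h, Polynomial.natDegree_zero] at hdeg
    omega
  unfold absA
  rw [if_neg hne, if_neg hu, hdeg, pow_succ]
  ring

lemma absA_C {a : Fq} (ha : a ≠ 0) : absA Fq (Polynomial.C a) = 1 := by
  unfold absA
  rw [if_neg (by simpa using ha), Polynomial.natDegree_C, pow_zero]

lemma L_scale (r : ℕ) (hr : 1 ≤ r) {c : ℝ} (hc : 0 < c) {t : ℝ} (ht : c ≤ t) :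
    e1 Fq r c ((Fintype.card Fq : ℝ) ^ r * t)
      = (Fintype.card Fq : ℝ) ^ (r + 1) * e1 Fq r c t
        - ((Fintype.card Fq : ℝ) - 1) * c := by
  classical
  set Q : ℝ := (Fintype.card Fq : ℝ) with hQdef
  have hQ1 : (1:ℝ) < Q := one_lt_Q
  have hQ0 : (0:ℝ) < Q := Q_pos
  have ht0 : 0 < t := lt_of_lt_of_le hc ht
  have hQr : (1:ℝ) ≤ Q ^ r := one_le_pow₀ hQ1.le
  have hqt : c ≤ Q ^ r * t := le_trans ht (le_mul_of_one_le_left ht0.le hQr)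
  set f : Polynomial Fq → ℝ := fun y => max (Q ^ r * t - absA Fq y ^ r * c) 0 with hf
  have hsum : Summable f := summable_e1 Fq r hr hc _
  have hinj : ∀ a : Fq, Function.Injective (fun u : Polynomial Fq => polyEquiv Fq (a, u)) := by
    intro a u₁ u₂ h
    have := (polyEquiv Fq).injective h
    exact congrArg Prod.snd this
  have key : e1 Fq r c (Q ^ r * t) = ∑' p : Fq × Polynomial Fq, f (polyEquiv Fq p) :=
    ((polyEquiv Fq).tsum_eq f).symm
  have hprod : Summable (fun p : Fq × Polynomial Fq => f (polyEquiv Fq p)) :=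
    (polyEquiv Fq).summable_iff.2 hsum
  have hslice : ∀ a : Fq, Summable (fun u : Polynomial Fq => f (polyEquiv Fq (a, u))) :=
    fun a => hsum.comp_injective (hinj a)
  rw [key, Summable.tsum_prod' hprod hslice]
  have hsplit : ∀ a : Fq, (∑' u : Polynomial Fq, f (polyEquiv Fq (a, u)))
      = f (Polynomial.C a) + Q ^ r * (e1 Fq r c t - t) := by
    intro a
    have hsa : Summable fun u : Polynomial Fq => f (polyEquiv Fq (a, u)) :=
      hsum.comp_injective (hinj a)
    rw [tsum_split_zero _ hsa]
    congr 1
    · simp [polyEquiv_apply]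
    · have hcongr : ∀ u : {u : Polynomial Fq // u ≠ 0},
          f (polyEquiv Fq (a, u.1)) = Q ^ r * max (t - absA Fq u.1 ^ r * c) 0 := by
        intro u
        rw [polyEquiv_apply, hf]
        simp only
        rw [absA_C_add_mul_X Fq a u.2, mul_pow,
          mul_max_of_nonneg _ _ (pow_nonneg hQ0.le r), mul_zero]
        congr 1
        ring
      rw [tsum_congr hcongr, tsum_mul_left]
      have hzero : max (t - absA Fq (0 : Polynomial Fq) ^ r * c) 0 = t := by
        rw [absA_zero, zero_pow (by omega : r ≠ 0), zero_mul, sub_zero]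
        exact max_eq_left ht0.le
      have hrest : (∑' u : {u : Polynomial Fq // u ≠ 0}, max (t - absA Fq u.1 ^ r * c) 0)
          = e1 Fq r c t - t := by
        have hsplit2 := tsum_split_zero
          (fun u : Polynomial Fq => max (t - absA Fq u ^ r * c) 0) (summable_e1 Fq r hr hc t)
        rw [hzero] at hsplit2
        have hE : e1 Fq r c t
            = t + ∑' u : {u : Polynomial Fq // u ≠ 0}, max (t - absA Fq u.1 ^ r * c) 0 :=
          hsplit2
        linarith [hE]
      rw [hrest]
  rw [tsum_congr hsplit, tsum_fintype, Finset.sum_add_distrib, Finset.sum_const,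
    Finset.card_univ]
  have hCa : ∀ a : Fq, f (Polynomial.C a) = (Q ^ r * t - c) + (if a = 0 then c else 0) := by
    intro a
    rw [hf]
    simp only
    by_cases ha : a = 0
    · subst ha
      rw [Polynomial.C_0, absA_zero, zero_pow (by omega : r ≠ 0), zero_mul, sub_zero,
        max_eq_left (by nlinarith), if_pos (rfl : (0 : Fq) = 0)]
      ring
    · rw [absA_C Fq ha, one_pow, one_mul, max_eq_left (by nlinarith), if_neg ha]
      ring
  rw [Finset.sum_congr rfl (fun a _ => hCa a), Finset.sum_add_distrib, Finset.sum_const,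
    Finset.sum_ite_eq' Finset.univ (0 : Fq) fun _ => c, if_pos (Finset.mem_univ _),
    Finset.card_univ]
  rw [nsmul_eq_mul, nsmul_eq_mul, ← hQdef]
  rw [pow_succ]
  ring

lemma L_scale_pow (r : ℕ) (hr : 1 ≤ r) {c : ℝ} (hc : 0 < c) (d : ℕ) {t : ℝ} (ht : c ≤ t) :
    e1 Fq r c (((Fintype.card Fq : ℝ) ^ r) ^ d * t) - dOne Fq r c
      = ((Fintype.card Fq : ℝ) ^ (r + 1)) ^ d * (e1 Fq r c t - dOne Fq r c) := by
  set Q : ℝ := (Fintype.card Fq : ℝ) with hQdef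
  have hQ1 : (1:ℝ) < Q := one_lt_Q
  have hB : (1:ℝ) < Q ^ (r + 1) := one_lt_pow₀ hQ1 (by omega)
  have hBne : Q ^ (r + 1) - 1 ≠ 0 := by linarith
  have hdone : dOne Fq r c * (Q ^ (r + 1) - 1) = (Q - 1) * c := by
    rw [dOne, ← hQdef]
    field_simp
  induction d with
  | zero => simp
  | succ d ih =>
      have hQr : (1:ℝ) ≤ Q ^ r := one_le_pow₀ hQ1.le
      have hQrd : (1:ℝ) ≤ (Q ^ r) ^ d := one_le_pow₀ hQr
      have ht0 : 0 < t := lt_of_lt_of_le hc ht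
      have harg : c ≤ (Q ^ r) ^ d * t := le_trans ht (le_mul_of_one_le_left ht0.le hQrd)
      have hstep := L_scale Fq r hr hc harg
      have harg2 : (Q ^ r) ^ (d + 1) * t = Q ^ r * ((Q ^ r) ^ d * t) := by ring
      rw [harg2, hstep]
      have hih : e1 Fq r c ((Q ^ r) ^ d * t)
          = (Q ^ (r + 1)) ^ d * (e1 Fq r c t - dOne Fq r c) + dOne Fq r c := by
        linarith [ih]
      rw [hih, show ((Q:ℝ) - 1) * c = dOne Fq r c * (Q ^ (r + 1) - 1) from hdone.symm]
      ring


/-! ### epsHat one-variable lemmas -/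

lemma ehat_pos (r : ℕ) (hr : 1 ≤ r) {c : ℝ} (hc : 0 < c) {t : ℝ} (ht : c ≤ t) :
    0 < e1 Fq r c t - dOne Fq r c := by
  set Q : ℝ := (Fintype.card Fq : ℝ) with hQdef
  have hQ1 : (1:ℝ) < Q := one_lt_Q
  have hQr : (1:ℝ) < Q ^ r := one_lt_pow₀ hQ1 (by omega)
  have hB : Q < Q ^ (r + 1) := by
    rw [pow_succ]
    nlinarith
  have hd : dOne Fq r c < c := by
    rw [dOne]
    have h1 : (0:ℝ) < Q ^ (r + 1) - 1 := by nlinarith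
    have h2 : (Q - 1) / (Q ^ (r + 1) - 1) < 1 := (div_lt_one h1).2 (by nlinarith)
    nlinarith
  have h3 : e1 Fq r c c ≤ e1 Fq r c t := e1_mono Fq r hr hc ht
  have h4 : e1 Fq r c c = c := e1_self Fq r hr hc
  linarith

lemma ehat_scale (r : ℕ) (hr : 1 ≤ r) {c : ℝ} (hc : 0 < c) {p : Polynomial Fq} (hp : p ≠ 0)
    {t : ℝ} (ht : c ≤ t) :
    e1 Fq r c (absA Fq p ^ r * t) - dOne Fq r c
      = absA Fq p ^ (r + 1) * (e1 Fq r c t - dOne Fq r c) := by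
  have h1 : absA Fq p = (Fintype.card Fq : ℝ) ^ p.natDegree := if_neg hp
  rw [h1, pow_right_comm, L_scale_pow Fq r hr hc p.natDegree ht,
    pow_right_comm ((Fintype.card Fq : ℝ)) p.natDegree (r + 1)]

/-! ### Multivariable lemmas -/

lemma summable_G (r n : ℕ) (hr : 1 ≤ r) (s : Fin n → ℝ) (hs : ∀ i, 0 < s i) (x : ℝ) :
    Summable (fun y : Fin n → Polynomial Fq =>
      max (x - ⨆ i : Fin n, absA Fq (y i) ^ r * s i) 0) := by
  apply summable_of_absA_bound (fun i => x / s i)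
  intro y i hy
  have hx := max_pos_of_ne hy
  have hb : BddAbove (Set.range fun i : Fin n => absA Fq (y i) ^ r * s i) :=
    (Set.finite_range _).bddAbove
  have h1 := le_ciSup hb i
  exact absA_le_of hr (hs i) (by linarith)

lemma iSup_zero_fun {n : ℕ} (g : Fin n → ℝ) (hg : ∀ i, g i = 0) : (⨆ i, g i) = 0 := by
  cases n with
  | zero => exact Real.iSup_of_isEmpty _
  | succ k =>
      rw [show g = fun _ => (0:ℝ) from funext hg]
      exact ciSup_const

lemma epsFun_eq_tsum (r n : ℕ) (hr : 1 ≤ r) (s : Fin n → ℝ) (hs : ∀ i, 0 < s i)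
    {x : ℝ} (hx : 0 ≤ x) :
    epsFun Fq r n s x
      = ∑' y : Fin n → Polynomial Fq, max (x - ⨆ i : Fin n, absA Fq (y i) ^ r * s i) 0 := by
  rw [tsum_split_zero _ (summable_G Fq r n hr s hs x)]
  have h0 : max (x - ⨆ i : Fin n, absA Fq ((0 : Fin n → Polynomial Fq) i) ^ r * s i) 0 = x := by
    rw [iSup_zero_fun _ (fun i => by
      simp [absA_zero, zero_pow (show r ≠ 0 by omega)]), sub_zero]
    exact max_eq_left hx
  rw [h0]
  rfl

lemma epsFun_eq_of_zero {m : ℕ} (hm : m = 0) (r : ℕ) (σ : Fin m → ℝ) (x : ℝ) :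
    epsFun Fq r m σ x = x := by
  subst hm
  have hempty : IsEmpty {y : Fin 0 → Polynomial Fq // y ≠ 0} :=
    ⟨fun y => y.2 (funext fun j => j.elim0)⟩
  unfold epsFun
  haveI := hempty
  rw [tsum_empty, add_zero]

lemma epsFun_one (r : ℕ) (hr : 1 ≤ r) {c : ℝ} (hc : 0 < c) {t : ℝ} (ht : 0 ≤ t) :
    epsFun Fq r 1 (fun _ => c) t = e1 Fq r c t := by
  rw [epsFun_eq_tsum Fq r 1 hr _ (fun _ => hc) ht]
  unfold e1
  rw [← Equiv.tsum_eq ((Equiv.funUnique (Fin 1) (Polynomial Fq)).symm)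
      (fun y : Fin 1 → Polynomial Fq => max (t - ⨆ i : Fin 1, absA Fq (y i) ^ r * c) 0)]
  exact tsum_congr fun p => by rw [ciSup_unique]; rfl

lemma deltaFun_one (r : ℕ) (c : ℝ) : deltaFun Fq r 1 (fun _ => c) = dOne Fq r c := by
  unfold deltaFun dOne
  rw [Fin.sum_univ_one, epsFun_eq_of_zero Fq (by simp) r _ _]
  norm_num

lemma epsHat_one (r : ℕ) (hr : 1 ≤ r) {c : ℝ} (hc : 0 < c) {t : ℝ} (ht : 0 ≤ t) :
    epsHat Fq r 1 (fun _ => c) t = e1 Fq r c t - dOne Fq r c := by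
  unfold epsHat
  rw [epsFun_one Fq r hr hc ht, deltaFun_one]

lemma sup_cons {m : ℕ} (a : Fin (m + 1) → ℝ) (ha : ∀ i, 0 ≤ a i) :
    (⨆ i, a i) = max (a 0) (⨆ j : Fin m, a j.succ) := by
  cases m with
  | zero =>
      have h1 : (⨆ i, a i) = a 0 := by
        apply le_antisymm
        · exact ciSup_le fun i => le_of_eq (congrArg a (Fin.ext (by omega)))
        · exact le_ciSup ((Set.finite_range a).bddAbove) 0
      rw [h1, Real.iSup_of_isEmpty]
      exact (max_eq_left (ha 0)).symm
  | succ k =>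
      have hb : BddAbove (Set.range a) := (Set.finite_range a).bddAbove
      have hb' : BddAbove (Set.range fun j : Fin (k + 1) => a j.succ) :=
        (Set.finite_range _).bddAbove
      apply le_antisymm
      · refine ciSup_le fun i => ?_
        refine Fin.cases ?_ ?_ i
        · exact le_max_left _ _
        · intro j
          exact le_trans (le_ciSup hb' j) (le_max_right _ _)
      · exact max_le (le_ciSup hb 0) (ciSup_le fun j => le_ciSup hb j.succ)

lemma ehat_sup (r m : ℕ) (hr : 1 ≤ r) {c : ℝ} (hc : 0 < c) (w : Fin m → ℝ)
    (hw : ∀ j, c ≤ w j) {z : Fin m → Polynomial Fq} (hz : z ≠ 0) :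
    e1 Fq r c (⨆ j, absA Fq (z j) ^ r * w j) - dOne Fq r c
      = ⨆ j, absA Fq (z j) ^ (r + 1) * (e1 Fq r c (w j) - dOne Fq r c) := by
  have hm : m ≠ 0 := by rintro rfl; exact hz (funext fun j => j.elim0)
  haveI : Nonempty (Fin m) := ⟨⟨0, Nat.pos_of_ne_zero hm⟩⟩
  set a : Fin m → ℝ := fun j => absA Fq (z j) ^ r * w j with ha
  set b : Fin m → ℝ := fun j => absA Fq (z j) ^ (r + 1) * (e1 Fq r c (w j) - dOne Fq r c)
    with hb
  obtain ⟨j₀, hj₀⟩ := Function.ne_iff.1 hz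
  obtain ⟨j₁, hj₁⟩ := Finite.exists_max a
  have hzj₁ : z j₁ ≠ 0 := by
    intro h0
    have ha1 : a j₁ = 0 := by
      rw [ha]; simp [h0, absA_zero, zero_pow (show r ≠ 0 by omega)]
    have ha0 : 0 < a j₀ := by
      have h1 : (1:ℝ) ≤ absA Fq (z j₀) ^ r := one_le_pow₀ (one_le_absA hj₀)
      have h2 : 0 < w j₀ := lt_of_lt_of_le hc (hw j₀)
      rw [ha]; simp only []; nlinarith
    have := hj₁ j₀
    rw [ha1] at this
    linarith
  have haj₁ : c ≤ a j₁ := by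
    have h1 : (1:ℝ) ≤ absA Fq (z j₁) ^ r := one_le_pow₀ (one_le_absA hzj₁)
    have h2 : 0 < w j₁ := lt_of_lt_of_le hc (hw j₁)
    calc c ≤ w j₁ := hw j₁
      _ ≤ a j₁ := by rw [ha]; simp only []; nlinarith
  have hsup_a : (⨆ j, a j) = a j₁ :=
    le_antisymm (ciSup_le hj₁) (le_ciSup ((Set.finite_range a).bddAbove) j₁)
  have hscale : ∀ j, z j ≠ 0 → e1 Fq r c (a j) - dOne Fq r c = b j := fun j hj =>
    ehat_scale Fq r hr hc hj (hw j)
  have hbj₁pos : 0 < b j₁ := by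
    rw [← hscale j₁ hzj₁]
    exact ehat_pos Fq r hr hc haj₁
  have hble : ∀ j, b j ≤ b j₁ := by
    intro j
    by_cases hj : z j = 0
    · have hbj : b j = 0 := by
        rw [hb]; simp [hj, absA_zero, zero_pow (show r + 1 ≠ 0 by omega)]
      linarith
    · rw [← hscale j hj, ← hscale j₁ hzj₁]
      have := e1_mono Fq r hr hc (hj₁ j)
      linarith
  rw [hsup_a, hscale j₁ hzj₁]
  exact (le_antisymm (ciSup_le hble) (le_ciSup ((Set.finite_range b).bddAbove) j₁)).symm


set_option maxHeartbeats 1000000 in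
lemma struct (r m : ℕ) (hr : 1 ≤ r) {c : ℝ} (s : Fin (m + 1) → ℝ) (hs : ∀ i, 0 < s i)
    (hs0 : s 0 = c) (hgec : ∀ i, c ≤ s i) {x : ℝ} (hx : c ≤ x) :
    epsFun Fq r (m + 1) s x
      = epsFun Fq (r + 1) m (fun j => e1 Fq r c (s j.succ) - dOne Fq r c)
          (e1 Fq r c x - dOne Fq r c) + dOne Fq r c := by
  have hc : 0 < c := hs0 ▸ hs 0
  have hx0 : 0 ≤ x := le_trans hc.le hx
  -- Step A
  have hA : epsFun Fq r (m + 1) s x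
      = ∑' z : Fin m → Polynomial Fq,
          max (e1 Fq r c x - e1 Fq r c (⨆ j : Fin m, absA Fq (z j) ^ r * s j.succ)) 0 := by
    rw [epsFun_eq_tsum Fq r (m + 1) hr s hs hx0]
    have hFsum : Summable (fun y : Fin (m + 1) → Polynomial Fq =>
        max (x - ⨆ i : Fin (m + 1), absA Fq (y i) ^ r * s i) 0) :=
      summable_G Fq r (m + 1) hr s hs x
    set e : (Fin m → Polynomial Fq) × Polynomial Fq ≃ (Fin (m + 1) → Polynomial Fq) :=
      (Equiv.prodComm _ _).trans (Fin.consEquiv fun _ => Polynomial Fq) with he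
    have hprod : Summable (fun p : (Fin m → Polynomial Fq) × Polynomial Fq =>
        max (x - ⨆ i : Fin (m + 1), absA Fq (e p i) ^ r * s i) 0) :=
      e.summable_iff.2 hFsum
    have hinj : ∀ z : Fin m → Polynomial Fq,
        Function.Injective (fun y₁ : Polynomial Fq => e (z, y₁)) := by
      intro z aa bb h
      have := e.injective h
      exact congrArg Prod.snd this
    have hslice : ∀ z : Fin m → Polynomial Fq, Summable fun y₁ : Polynomial Fq =>
        max (x - ⨆ i : Fin (m + 1), absA Fq (e (z, y₁) i) ^ r * s i) 0 :=
      fun z => hFsum.comp_injective (hinj z)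
    rw [← Equiv.tsum_eq e (fun y : Fin (m + 1) → Polynomial Fq =>
        max (x - ⨆ i : Fin (m + 1), absA Fq (y i) ^ r * s i) 0),
      Summable.tsum_prod' hprod hslice]
    refine tsum_congr fun z => ?_
    have hcons : ∀ y₁ : Polynomial Fq,
        max (x - ⨆ i : Fin (m + 1), absA Fq (e (z, y₁) i) ^ r * s i) 0
          = max (x - max (absA Fq y₁ ^ r * c)
              (⨆ j : Fin m, absA Fq (z j) ^ r * s j.succ)) 0 := by
      intro y₁
      have hsup : (⨆ i : Fin (m + 1), absA Fq (e (z, y₁) i) ^ r * s i)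
          = max (absA Fq (e (z, y₁) 0) ^ r * s 0)
              (⨆ j : Fin m, absA Fq (e (z, y₁) j.succ) ^ r * s j.succ) :=
        sup_cons (fun i => absA Fq (e (z, y₁) i) ^ r * s i)
          (fun i => mul_nonneg (pow_nonneg (absA_nonneg _) r) (hs i).le)
      rw [hsup, hs0]
      simp only [show e (z, y₁) = Fin.cons y₁ z from rfl, Fin.cons_zero, Fin.cons_succ]
    rw [tsum_congr hcons]
    exact SL Fq r hr hc
      (Real.iSup_nonneg fun j : Fin m => mul_nonneg (pow_nonneg (absA_nonneg _) r) (hs j.succ).le) x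
  rw [hA]
  -- Step B
  have hsumB : Summable (fun z : Fin m → Polynomial Fq =>
      max (e1 Fq r c x - e1 Fq r c (⨆ j : Fin m, absA Fq (z j) ^ r * s j.succ)) 0) := by
    apply summable_of_absA_bound (fun j : Fin m => e1 Fq r c x / s j.succ)
    intro z j hz
    have hpos := max_pos_of_ne hz
    have hMnn : 0 ≤ ⨆ j' : Fin m, absA Fq (z j') ^ r * s j'.succ :=
      Real.iSup_nonneg fun j' => mul_nonneg (pow_nonneg (absA_nonneg _) r) (hs j'.succ).le
    have hb : BddAbove (Set.range fun j' : Fin m => absA Fq (z j') ^ r * s j'.succ) :=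
      (Set.finite_range _).bddAbove
    have h1 := le_ciSup hb j
    have h2 := e1_ge_self Fq r hr hc hMnn
    exact absA_le_of hr (hs j.succ) (by linarith)
  rw [tsum_split_zero _ hsumB]
  have hz0 : (⨆ j : Fin m, absA Fq ((0 : Fin m → Polynomial Fq) j) ^ r * s j.succ) = 0 :=
    iSup_zero_fun _ fun j => by simp [absA_zero, zero_pow (show r ≠ 0 by omega)]
  rw [hz0, e1_zero Fq r hc, sub_zero,
    max_eq_left (le_trans hx0 (e1_ge_self Fq r hr hc hx0))]
  have hterm : ∀ z : {z : Fin m → Polynomial Fq // z ≠ 0},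
      max (e1 Fq r c x - e1 Fq r c (⨆ j : Fin m, absA Fq (z.1 j) ^ r * s j.succ)) 0
        = max ((e1 Fq r c x - dOne Fq r c)
            - ⨆ j : Fin m, absA Fq (z.1 j) ^ (r + 1) * (e1 Fq r c (s j.succ) - dOne Fq r c))
            0 := by
    intro z
    rw [← ehat_sup Fq r m hr hc (fun j => s j.succ) (fun j => hgec j.succ) z.2]
    congr 1
    ring
  rw [tsum_congr hterm]
  unfold epsFun
  have hSS : (∑' z : {z : Fin m → Polynomial Fq // z ≠ 0},
      max ((e1 Fq r c x - dOne Fq r c)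
        - ⨆ j : Fin m, absA Fq (z.1 j) ^ (r + 1) * (e1 Fq r c (s j.succ) - dOne Fq r c)) 0)
      = ∑' z : {z : Fin m → Polynomial Fq // z ≠ 0},
      max ((e1 Fq r c x - dOne Fq r c)
        - ⨆ j : Fin m, absA Fq (z.1 j) ^ (r + 1)
            * ((fun j' : Fin m => e1 Fq r c (s j'.succ) - dOne Fq r c) j)) 0 :=
    tsum_congr fun z => rfl
  rw [hSS]
  ring

end S8

set_option maxHeartbeats 1000000 in
/-- Let `r ≥ 1`, `n ≥ 0` and `s = (s_1, …, s_{n+1}) ∈ ℝ_{>0}^{n+1}` with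
`s_i ≤ s_{i+1}`.  Then `s'_i := ε̂^{r,1}_{s_1}(s_{i+1}) > 0` for `1 ≤ i ≤ n`, and
`δ^{r,n+1}(s_1, …, s_{n+1}) = δ^{r,1}(s_1) + δ^{r+1,n}(s'_1, …, s'_n)`. -/
theorem statement8 (Fq : Type) [Field Fq] [Fintype Fq]
    (r n : ℕ) (hr : 1 ≤ r) (s : Fin (n + 1) → ℝ) (hs : ∀ i, 0 < s i)
    (hmono : Monotone s) :
    (∀ i : Fin n, 0 < epsHat Fq r 1 (fun _ => s 0) (s i.succ)) ∧
    deltaFun Fq r (n + 1) s =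
      deltaFun Fq r 1 (fun _ => s 0) +
        deltaFun Fq (r + 1) n (fun i => epsHat Fq r 1 (fun _ => s 0) (s i.succ)) := by
  classical
  have hc : 0 < s 0 := hs 0
  have hgec : ∀ i, s 0 ≤ s i := fun i => hmono (Fin.zero_le i)
  have hQ1 : (1 : ℝ) < (Fintype.card Fq : ℝ) := S8.one_lt_Q
  constructor
  · intro i
    rw [S8.epsHat_one Fq r hr hc (hs i.succ).le]
    exact S8.ehat_pos Fq r hr hc (hgec i.succ)
  · set Q : ℝ := (Fintype.card Fq : ℝ) with hQdef
    set d₁ : ℝ := S8.dOne Fq r (s 0) with hd₁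
    have hhat : (fun i : Fin n => epsHat Fq r 1 (fun _ => s 0) (s i.succ))
        = fun i => S8.e1 Fq r (s 0) (s i.succ) - d₁ :=
      funext fun i => S8.epsHat_one Fq r hr hc (hs i.succ).le
    rw [hhat, S8.deltaFun_one Fq r (s 0), ← hd₁]
    set E : Fin n → ℝ := fun j => epsFun Fq (r + 1) (j : ℕ)
        (fun k => S8.e1 Fq r (s 0) (s (Fin.castLE j.isLt.le k).succ) - d₁)
        (S8.e1 Fq r (s 0) (s j.succ) - d₁) with hE
    have hRHS : deltaFun Fq (r + 1) n (fun i => S8.e1 Fq r (s 0) (s i.succ) - d₁)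
        = (Q - 1) / (Q ^ (r + 1 + n) - 1) * ∑ j : Fin n, Q ^ (n - 1 - (j : ℕ)) * E j := by
      unfold deltaFun
      rfl
    have hLHS : deltaFun Fq r (n + 1) s
        = (Q - 1) / (Q ^ (r + (n + 1)) - 1) *
          (Q ^ n * s 0 + ∑ j : Fin n, Q ^ (n - 1 - (j : ℕ)) * (E j + d₁)) := by
      unfold deltaFun
      rw [Fin.sum_univ_succ]
      congr 2
      · rw [S8.epsFun_eq_of_zero Fq (by simp : ((0 : Fin (n + 1)) : ℕ) = 0) r _ (s 0),
          show n + 1 - 1 - ((0 : Fin (n + 1)) : ℕ) = n from by simp]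
      · refine Finset.sum_congr rfl fun j _ => ?_
        have hexp : n + 1 - 1 - ((Fin.succ j : Fin (n + 1)) : ℕ) = n - 1 - (j : ℕ) := by
          rw [Fin.val_succ]
          omega
        rw [hexp]
        congr 1
        exact S8.struct Fq r (j : ℕ) hr
          (fun k : Fin ((j : ℕ) + 1) => s (Fin.castLE (Fin.succ j).isLt.le k))
          (fun k => hs _) rfl (fun k => hgec _) (hgec (Fin.succ j))
    rw [hLHS, hRHS]
    have hsum : (∑ j : Fin n, Q ^ (n - 1 - (j : ℕ)) * (E j + d₁))
        = (∑ j : Fin n, Q ^ (n - 1 - (j : ℕ)) * E j)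
          + (∑ j : Fin n, Q ^ (n - 1 - (j : ℕ))) * d₁ := by
      rw [Finset.sum_mul]
      rw [← Finset.sum_add_distrib]
      exact Finset.sum_congr rfl fun j _ => by ring
    have hgeo : (∑ j : Fin n, Q ^ (n - 1 - (j : ℕ))) = (Q ^ n - 1) / (Q - 1) := by
      rw [Fin.sum_univ_eq_sum_range (fun i => Q ^ (n - 1 - i)) n,
        Finset.sum_range_reflect (fun i => Q ^ i) n, geom_sum_eq hQ1.ne' n]
    rw [hsum, hgeo]
    set W : ℝ := ∑ j : Fin n, Q ^ (n - 1 - (j : ℕ)) * E j with hW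
    have hd : d₁ = (Q - 1) / (Q ^ (r + 1) - 1) * s 0 := rfl
    have hQc : Q - 1 ≠ 0 := by linarith
    have hQb : Q ^ (r + 1) - 1 ≠ 0 := by
      have := one_lt_pow₀ hQ1 (show r + 1 ≠ 0 by omega); linarith
    have hQa : Q ^ (r + (n + 1)) - 1 ≠ 0 := by
      have := one_lt_pow₀ hQ1 (show r + (n + 1) ≠ 0 by omega); linarith
    have hpow : Q ^ (r + 1 + n) = Q ^ (r + (n + 1)) := by
      rw [show r + 1 + n = r + (n + 1) from by omega]
    rw [hpow, hd]
    field_simp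
    ring
end
end

section
/- Let r ≥ 1, n ≥ 0, m ≥ 0 and s = (s_1, …, s_{n+m}) ∈ ℝ_{>0}^{n+m} with s_i ≤ s_{i+1} for 1 ≤ i ≤ n+m−1. Put t = (s_1, …, s_m). Then s'_i := ε̂^{r,m}_t(s_{m+i}) > 0 for 1 ≤ i ≤ n, and for every x ∈ ℝ_{≥0} one has ε̂^{r,n+m}_s(x) = ε̂^{r+m,n}_{s'}(ε̂^{r,m}_t(x)), where s' = (s'_1, …, s'_n). -/
noncomputable section

open scoped BigOperators

namespace St9
variable {Fq : Type} [Field Fq] [Fintype Fq]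

lemma one_lt_q : 1 < (Fintype.card Fq : ℝ) := by
  exact_mod_cast Fintype.one_lt_card

lemma q_pos : (0:ℝ) < (Fintype.card Fq : ℝ) := lt_trans one_pos one_lt_q

lemma absA_zero : absA Fq 0 = 0 := by simp [absA]

lemma absA_nonneg (p : Polynomial Fq) : 0 ≤ absA Fq p := by
  unfold absA; split
  · exact le_refl 0
  · positivity

lemma absA_one_le {p : Polynomial Fq} (hp : p ≠ 0) : 1 ≤ absA Fq p := by
  unfold absA; rw [if_neg hp]
  exact one_le_pow₀ (le_of_lt (one_lt_q (Fq := Fq)))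

lemma absA_cases (p : Polynomial Fq) : absA Fq p = 0 ∨ 1 ≤ absA Fq p := by
  by_cases hp : p = 0
  · left; simp [hp, absA_zero]
  · right; exact absA_one_le hp

/-- polynomials of bounded absA form a finite set -/
lemma finite_absA_le (C : ℝ) : {p : Polynomial Fq | absA Fq p ≤ C}.Finite := by
  obtain ⟨D, hD⟩ := pow_unbounded_of_one_lt (y := (Fintype.card Fq : ℝ)) C (one_lt_q)
  apply Set.Finite.of_finite_image (f := fun p : Polynomial Fq => fun i : Fin D => p.coeff i)
  · exact Set.Finite.subset (Set.finite_univ) (Set.subset_univ _)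
  · intro p hp p' hp' h
    have hdeg : ∀ x : Polynomial Fq, absA Fq x ≤ C → ∀ n, D ≤ n → x.coeff n = 0 := by
      intro x hx n hn
      by_cases hx0 : x = 0
      · simp [hx0]
      · have : (Fintype.card Fq : ℝ) ^ x.natDegree < (Fintype.card Fq : ℝ) ^ D :=
          lt_of_le_of_lt (by simpa [absA, hx0] using hx) hD
        have hdn : x.natDegree < D := by
          exact (pow_lt_pow_iff_right₀ one_lt_q).1 this
        exact Polynomial.coeff_eq_zero_of_natDegree_lt (lt_of_lt_of_le hdn hn)
    apply Polynomial.ext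
    intro n
    by_cases hn : n < D
    · exact congrFun h ⟨n, hn⟩
    · rw [hdeg p hp n (le_of_not_gt hn), hdeg p' hp' n (le_of_not_gt hn)]

/-! ### the sup -/

lemma Mx_nonneg {n r : ℕ} {s : Fin n → ℝ} (hs : ∀ i, 0 ≤ s i) (y : Fin n → Polynomial Fq) :
    0 ≤ ⨆ i : Fin n, (absA Fq (y i)) ^ r * s i :=
  Real.iSup_nonneg fun i => mul_nonneg (pow_nonneg (absA_nonneg _) _) (hs i)

lemma Mx_zero {n r : ℕ} (hr : 1 ≤ r) (s : Fin n → ℝ) :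
    (⨆ i : Fin n, (absA Fq ((0 : Fin n → Polynomial Fq) i)) ^ r * s i) = 0 := by
  have : ∀ i : Fin n, (absA Fq ((0 : Fin n → Polynomial Fq) i)) ^ r * s i = 0 := by
    intro i
    simp [absA_zero, zero_pow (by omega : r ≠ 0)]
  rcases isEmpty_or_nonempty (Fin n) with h | h
  · exact Real.iSup_of_isEmpty _
  · simp only [this]; exact ciSup_const

lemma le_Mx {n r : ℕ} {s : Fin n → ℝ} (y : Fin n → Polynomial Fq) (i : Fin n) :
    (absA Fq (y i)) ^ r * s i ≤ ⨆ j : Fin n, (absA Fq (y j)) ^ r * s j :=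
  le_ciSup (f := fun j : Fin n => (absA Fq (y j)) ^ r * s j)
    (Set.Finite.bddAbove (Set.finite_range _)) i

lemma Mx_snoc {k r : ℕ} {s : Fin (k+1) → ℝ} (hs : ∀ i, 0 ≤ s i) (y : Fin (k+1) → Polynomial Fq) :
    (⨆ i : Fin (k+1), (absA Fq (y i)) ^ r * s i) =
      max (⨆ j : Fin k, (absA Fq (y j.castSucc)) ^ r * s j.castSucc)
        ((absA Fq (y (Fin.last k))) ^ r * s (Fin.last k)) := by
  apply le_antisymm
  · apply Real.iSup_le
    · intro i
      induction i using Fin.lastCases with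
      | last => exact le_max_right _ _
      | cast j =>
          exact le_trans (le_ciSup (f := fun j : Fin k => (absA Fq (y j.castSucc)) ^ r * s j.castSucc)
            (Set.Finite.bddAbove (Set.finite_range _)) j) (le_max_left _ _)
    · exact le_trans (mul_nonneg (pow_nonneg (absA_nonneg _) _) (hs _)) (le_max_right _ _)
  · apply max_le
    · apply Real.iSup_le
      · intro j; exact le_Mx y j.castSucc
      · exact Mx_nonneg hs y
    · exact le_Mx y (Fin.last k)

/-! ### summability -/

lemma summable_master {n r : ℕ} (hr : 1 ≤ r) {s : Fin n → ℝ} (hs : ∀ i, 0 < s i) (x : ℝ) :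
    Summable (fun y : Fin n → Polynomial Fq =>
      max (x - ⨆ i : Fin n, (absA Fq (y i)) ^ r * s i) 0) := by
  have hfin : (Set.pi Set.univ (fun i : Fin n =>
      {p : Polynomial Fq | absA Fq p ≤ max (x / s i) 1})).Finite :=
    Set.Finite.pi (fun i => finite_absA_le _)
  apply summable_of_ne_finset_zero (s := hfin.toFinset)
  intro y hy
  rw [Set.Finite.mem_toFinset] at hy
  rw [max_eq_right]
  rw [sub_nonpos]
  by_contra hlt
  push_neg at hlt
  apply hy
  intro i _
  have h1 : (absA Fq (y i)) ^ r * s i < x := lt_of_le_of_lt (le_Mx y i) hlt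
  have h2 : (absA Fq (y i)) ^ r < x / s i := (lt_div_iff₀ (hs i)).2 h1
  rcases absA_cases (y i) with h | h
  · simp only [Set.mem_setOf_eq, h]; exact le_max_of_le_right zero_le_one
  · have : absA Fq (y i) ≤ (absA Fq (y i)) ^ r := le_self_pow₀ (by linarith) (by omega)
    exact le_max_of_le_left (le_trans this (le_of_lt h2))

lemma finite_onedim_support {R : ℕ} (hR : 1 ≤ R) {θ : ℝ} (hθ : 0 < θ) (x : ℝ) :
    {v : Polynomial Fq | (absA Fq v) ^ R * θ < x}.Finite := by
  apply Set.Finite.subset (finite_absA_le (max (x/θ) 1))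
  intro v hv
  have h2 : (absA Fq v) ^ R < x / θ := (lt_div_iff₀ hθ).2 hv
  rcases absA_cases v with h | h
  · simp only [Set.mem_setOf_eq, h]; exact le_max_of_le_right zero_le_one
  · have : absA Fq v ≤ (absA Fq v) ^ R := le_self_pow₀ (by linarith) (by omega)
    exact le_max_of_le_left (le_trans this (le_of_lt h2))

/-! ### epsFun basics -/

lemma tsum_subtype_ne {ι : Type*} (f : ι → ℝ) (hf : Summable f) (a : ι) :
    ∑' x : ι, f x = f a + ∑' x : {x : ι // x ≠ a}, f x := by
  classical
  rw [hf.tsum_eq_add_tsum_ite a]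
  congr 1
  have : ∑' x : {x : ι // x ≠ a}, f x = ∑' x : ({x : ι | x ≠ a} : Set ι), f x := rfl
  rw [this, tsum_subtype]
  apply tsum_congr
  intro b
  by_cases hb : b = a <;> simp [Set.indicator_apply, hb]

lemma summable_sub {r n : ℕ} (hr : 1 ≤ r) {s : Fin n → ℝ} (hs : ∀ i, 0 < s i) (x : ℝ) :
    Summable (fun y : {y : Fin n → Polynomial Fq // y ≠ 0} =>
      max (x - ⨆ i : Fin n, (absA Fq (y.1 i)) ^ r * s i) 0) :=
  (summable_master hr hs x).subtype _

lemma eps_full {r n : ℕ} (hr : 1 ≤ r) {s : Fin n → ℝ} (hs : ∀ i, 0 < s i) {x : ℝ} (hx : 0 ≤ x) :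
    epsFun Fq r n s x =
      ∑' y : Fin n → Polynomial Fq, max (x - ⨆ i : Fin n, (absA Fq (y i)) ^ r * s i) 0 := by
  rw [tsum_subtype_ne _ (summable_master hr hs x) 0, Mx_zero hr s]
  unfold epsFun
  congr 1
  simp [hx]

lemma eps_of_nonpos {r n : ℕ} {s : Fin n → ℝ} (hs : ∀ i, 0 < s i) {x : ℝ} (hx : x ≤ 0) :
    epsFun Fq r n s x = x := by
  unfold epsFun
  have h : ∀ y : {y : Fin n → Polynomial Fq // y ≠ 0},
      max (x - ⨆ i : Fin n, (absA Fq (y.1 i)) ^ r * s i) 0 = 0 := by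
    intro y
    have := Mx_nonneg (Fq := Fq) (r := r) (fun i => le_of_lt (hs i)) y.1
    exact max_eq_right (by linarith)
  rw [tsum_congr h, tsum_zero, add_zero]

lemma eps_mono {r n : ℕ} (hr : 1 ≤ r) {s : Fin n → ℝ} (hs : ∀ i, 0 < s i) :
    Monotone (epsFun Fq r n s) := by
  intro a b hab
  unfold epsFun
  apply add_le_add hab
  apply Summable.tsum_le_tsum _ (summable_sub hr hs a) (summable_sub hr hs b)
  intro y
  exact max_le_max (by linarith) le_rfl

lemma eps_slope {r n : ℕ} (hr : 1 ≤ r) {s : Fin n → ℝ} (hs : ∀ i, 0 < s i) {a b : ℝ}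
    (hab : a ≤ b) : b - a ≤ epsFun Fq r n s b - epsFun Fq r n s a := by
  unfold epsFun
  have h : (∑' y : {y : Fin n → Polynomial Fq // y ≠ 0},
      max (a - ⨆ i : Fin n, (absA Fq (y.1 i)) ^ r * s i) 0) ≤
      ∑' y : {y : Fin n → Polynomial Fq // y ≠ 0},
      max (b - ⨆ i : Fin n, (absA Fq (y.1 i)) ^ r * s i) 0 := by
    apply Summable.tsum_le_tsum _ (summable_sub hr hs a) (summable_sub hr hs b)
    intro y
    exact max_le_max (by linarith) le_rfl
  linarith

lemma eps_zero {r n : ℕ} {s : Fin n → ℝ} (hs : ∀ i, 0 < s i) :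
    epsFun Fq r n s 0 = 0 := eps_of_nonpos hs le_rfl

lemma eps_nonneg {r n : ℕ} (hr : 1 ≤ r) {s : Fin n → ℝ} (hs : ∀ i, 0 < s i) {x : ℝ}
    (hx : 0 ≤ x) : 0 ≤ epsFun Fq r n s x := by
  have := eps_mono (Fq := Fq) hr hs hx
  rwa [eps_zero hs] at this

lemma eps_ge_self {r n : ℕ} {s : Fin n → ℝ} {x : ℝ} :
    x ≤ epsFun Fq r n s x := by
  unfold epsFun
  have : (0:ℝ) ≤ ∑' y : {y : Fin n → Polynomial Fq // y ≠ 0},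
      max (x - ⨆ i : Fin n, (absA Fq (y.1 i)) ^ r * s i) 0 :=
    tsum_nonneg fun y => le_max_right _ _
  linarith

lemma eps_pos {r n : ℕ} (hr : 1 ≤ r) {s : Fin n → ℝ} (hs : ∀ i, 0 < s i) {x : ℝ}
    (hx : 0 < x) : 0 < epsFun Fq r n s x := lt_of_lt_of_le hx eps_ge_self

lemma delta_nonneg {r n : ℕ} {s : Fin n → ℝ} (hs : ∀ i, 0 < s i) :
    0 ≤ deltaFun Fq r n s := by
  unfold deltaFun
  apply mul_nonneg
  · apply div_nonneg (by linarith [one_lt_q (Fq := Fq)])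
    have : (1:ℝ) ≤ (Fintype.card Fq : ℝ) ^ (r + n) := one_le_pow₀ (le_of_lt one_lt_q)
    linarith
  · apply Finset.sum_nonneg
    intro i _
    apply mul_nonneg (by positivity)
    exact le_trans (le_of_lt (hs i)) eps_ge_self

/-! ### tsum utilities -/

lemma tsum_sub_single {ι : Type*} (f g : ι → ℝ) (a : ι) (hf : Summable f) (hg : Summable g)
    (h : ∀ x, x ≠ a → f x = g x) : ∑' x, f x = (∑' x, g x) + (f a - g a) := by
  classical
  rw [hf.tsum_eq_add_tsum_ite a, hg.tsum_eq_add_tsum_ite a]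
  have he : (∑' x, ite (x = a) 0 (f x)) = ∑' x, ite (x = a) 0 (g x) :=
    tsum_congr fun b => by by_cases hb : b = a <;> simp [hb, h b]
  rw [he]; ring

lemma key1 (x c M : ℝ) :
    max (x - max M c) 0 = max (x - M) 0 - max (min x c - M) 0 := by
  simp only [max_def, min_def]
  split_ifs <;> linarith

/-! ### the peel lemma -/

lemma inner_sum {R k : ℕ} (hR : 1 ≤ R) {σ' : Fin k → ℝ} (hpos : ∀ j, 0 < σ' j)
    {x c : ℝ} (hx : 0 ≤ x) (hc : 0 ≤ c) :
    ∑' u : Fin k → Polynomial Fq,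
        max (x - max (⨆ j : Fin k, (absA Fq (u j)) ^ R * σ' j) c) 0
      = max (epsFun Fq R k σ' x - epsFun Fq R k σ' c) 0 := by
  have h1 : ∀ u : Fin k → Polynomial Fq,
      max (x - max (⨆ j : Fin k, (absA Fq (u j)) ^ R * σ' j) c) 0
        = max (x - ⨆ j : Fin k, (absA Fq (u j)) ^ R * σ' j) 0
          - max (min x c - ⨆ j : Fin k, (absA Fq (u j)) ^ R * σ' j) 0 :=
    fun u => key1 _ _ _
  rw [tsum_congr h1, Summable.tsum_sub (summable_master hR hpos x) (summable_master hR hpos (min x c)),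
    ← eps_full hR hpos hx, ← eps_full hR hpos (le_min hx hc)]
  rcases le_total x c with h | h
  · rw [min_eq_left h, max_eq_right (by linarith [eps_mono (Fq := Fq) hR hpos h]), sub_self]
  · rw [min_eq_right h, max_eq_left (by linarith [eps_mono (Fq := Fq) hR hpos h])]

lemma peel {R k : ℕ} (hR : 1 ≤ R) {σ : Fin (k+1) → ℝ} (hσ : ∀ i, 0 < σ i) {x : ℝ} (hx : 0 ≤ x) :
    epsFun Fq R (k+1) σ x = ∑' v : Polynomial Fq,
      max (epsFun Fq R k (fun j => σ j.castSucc) x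
         - epsFun Fq R k (fun j => σ j.castSucc) ((absA Fq v) ^ R * σ (Fin.last k))) 0 := by
  have hσ' : ∀ j : Fin k, 0 < σ j.castSucc := fun j => hσ _
  rw [eps_full hR hσ hx]
  set e : (Fin (k+1) → Polynomial Fq) ≃ (Polynomial Fq × (Fin k → Polynomial Fq)) :=
    (Fin.insertNthEquiv (fun _ => Polynomial Fq) (Fin.last k)).symm with he
  have hval : ∀ (v : Polynomial Fq) (u : Fin k → Polynomial Fq),
      (⨆ i : Fin (k+1), (absA Fq (e.symm (v, u) i)) ^ R * σ i)
        = max (⨆ j : Fin k, (absA Fq (u j)) ^ R * σ j.castSucc)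
            ((absA Fq v) ^ R * σ (Fin.last k)) := by
    intro v u
    rw [Mx_snoc (fun i => le_of_lt (hσ i))]
    have h1 : ∀ j : Fin k, e.symm (v, u) j.castSucc = u j := by
      intro j
      simp [he, Fin.insertNthEquiv, Fin.insertNth_last, Fin.snoc_castSucc]
    have h2 : e.symm (v, u) (Fin.last k) = v := by
      simp [he, Fin.insertNthEquiv, Fin.insertNth_last, Fin.snoc_last]
    rw [h2]
    congr 1
    exact iSup_congr fun j => by rw [h1 j]
  have hmaster := summable_master (Fq := Fq) hR hσ x
  have hsumprod : Summable (fun p : Polynomial Fq × (Fin k → Polynomial Fq) =>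
      max (x - ⨆ i : Fin (k+1), (absA Fq (e.symm p i)) ^ R * σ i) 0) :=
    (Equiv.summable_iff e.symm).2 hmaster
  rw [← Equiv.tsum_eq e.symm, hsumprod.tsum_prod]
  apply tsum_congr
  intro v
  have : ∀ u : Fin k → Polynomial Fq,
      max (x - ⨆ i : Fin (k+1), (absA Fq (e.symm (v, u) i)) ^ R * σ i) 0
        = max (x - max (⨆ j : Fin k, (absA Fq (u j)) ^ R * σ j.castSucc)
            ((absA Fq v) ^ R * σ (Fin.last k))) 0 := fun u => by rw [hval]
  rw [tsum_congr this, inner_sum hR hσ' hx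
    (mul_nonneg (pow_nonneg (absA_nonneg _) _) (le_of_lt (hσ _)))]

/-! ### rank one scaling -/

lemma summable_onedim {R : ℕ} (hR : 1 ≤ R) {θ : ℝ} (hθ : 0 < θ) (x : ℝ) :
    Summable (fun v : Polynomial Fq => max (x - (absA Fq v) ^ R * θ) 0) := by
  apply summable_of_ne_finset_zero (s := (finite_onedim_support hR hθ x).toFinset)
  intro v hv
  rw [Set.Finite.mem_toFinset] at hv
  simp only [Set.mem_setOf_eq, not_lt] at hv
  exact max_eq_right (by linarith)

def affEquiv (Fq : Type) [Field Fq] [Fintype Fq] : Polynomial Fq ≃ Polynomial Fq × Fq where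
  toFun p := (p.divX, p.coeff 0)
  invFun wa := wa.1 * Polynomial.X + Polynomial.C wa.2
  left_inv p := by
    have := Polynomial.divX_mul_X_add p
    simpa using this
  right_inv := by
    rintro ⟨w, a⟩
    refine Prod.ext ?_ ?_
    · apply Polynomial.ext
      intro n
      rw [Polynomial.coeff_divX, Polynomial.coeff_add, Polynomial.coeff_mul_X,
        Polynomial.coeff_C, if_neg (Nat.succ_ne_zero n), add_zero]
    · simp [Polynomial.coeff_mul_X_zero]

lemma absA_affine {w : Polynomial Fq} (hw : w ≠ 0) (a : Fq) :
    absA Fq (w * Polynomial.X + Polynomial.C a) = (Fintype.card Fq : ℝ) * absA Fq w := by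
  have hdeg : (w * Polynomial.X).natDegree = w.natDegree + 1 :=
    Polynomial.natDegree_mul_X hw
  have hdeg2 : (w * Polynomial.X + Polynomial.C a).natDegree = w.natDegree + 1 := by
    rw [Polynomial.natDegree_add_C, hdeg]
  have hne : w * Polynomial.X + Polynomial.C a ≠ 0 := by
    intro h
    rw [h] at hdeg2
    simp at hdeg2
  unfold absA
  rw [if_neg hne, if_neg hw, hdeg2, pow_succ]
  ring

lemma absA_C_ne {a : Fq} (ha : a ≠ 0) : absA Fq (Polynomial.C a) = 1 := by
  unfold absA
  rw [if_neg (by simpa using ha), Polynomial.natDegree_C, pow_zero]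

lemma rank1 {R : ℕ} (hR : 1 ≤ R) {θ : ℝ} (hθ : 0 < θ) {x : ℝ} (hx : θ ≤ x) :
    (∑' v : Polynomial Fq, max ((Fintype.card Fq : ℝ) ^ R * x - (absA Fq v) ^ R * θ) 0)
      = (Fintype.card Fq : ℝ) ^ (R + 1) *
          (∑' v : Polynomial Fq, max (x - (absA Fq v) ^ R * θ) 0)
        - ((Fintype.card Fq : ℝ) - 1) * θ := by
  classical
  set q : ℝ := (Fintype.card Fq : ℝ) with hq
  have hq1 : 1 < q := one_lt_q
  have hx0 : 0 < x := lt_of_lt_of_le hθ hx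
  set f : Polynomial Fq → ℝ := fun v => max (q ^ R * x - (absA Fq v) ^ R * θ) 0 with hf
  set f₁ : Polynomial Fq → ℝ := fun v => max (x - (absA Fq v) ^ R * θ) 0 with hf₁
  have hsf : Summable f := summable_onedim hR hθ _
  have hsf₁ : Summable f₁ := summable_onedim hR hθ _
  set e := affEquiv Fq with he
  have hsF : Summable (fun p : Polynomial Fq × Fq => f (e.symm p)) :=
    (Equiv.summable_iff e.symm).2 hsf
  have step1 : ∑' v, f v = ∑' w : Polynomial Fq, ∑ a : Fq, f (w * Polynomial.X + Polynomial.C a) := by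
    rw [← Equiv.tsum_eq e.symm f, hsF.tsum_prod]
    exact tsum_congr fun w => tsum_fintype _
  set h : Polynomial Fq → ℝ := fun w => ∑ a : Fq, f (w * Polynomial.X + Polynomial.C a) with hh
  have hcard : (1 : ℕ) ≤ Fintype.card Fq := Fintype.card_pos
  have hwne : ∀ w : Polynomial Fq, w ≠ 0 → h w = q ^ (R + 1) * f₁ w := by
    intro w hw
    have hterm : ∀ a : Fq, f (w * Polynomial.X + Polynomial.C a) = q ^ R * f₁ w := by
      intro a
      simp only [hf, hf₁, absA_affine hw a, mul_pow]
      rw [mul_max_of_nonneg _ _ (by positivity : (0:ℝ) ≤ q ^ R), mul_zero, mul_sub]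
      ring_nf
      rfl
    simp only [hh, hterm, Finset.sum_const, Finset.card_univ, nsmul_eq_mul, ← hq, pow_succ]
    ring
  have hzero : h 0 = q ^ R * x + (q - 1) * (q ^ R * x - θ) := by
    have hterm : ∀ a : Fq, a ≠ 0 →
        f ((0 : Polynomial Fq) * Polynomial.X + Polynomial.C a) = q ^ R * x - θ := by
      intro a ha
      simp only [hf, zero_mul, zero_add, absA_C_ne ha, one_pow, one_mul]
      apply max_eq_left
      have h1 : (1:ℝ) ≤ q ^ R := one_le_pow₀ (le_of_lt hq1)
      nlinarith
    have h0 : f ((0 : Polynomial Fq) * Polynomial.X + Polynomial.C (0 : Fq)) = q ^ R * x := by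
      simp only [hf, zero_mul, zero_add, Polynomial.C_0, absA_zero]
      rw [zero_pow (by omega : R ≠ 0), zero_mul, sub_zero]
      apply max_eq_left
      positivity
    show (∑ a : Fq, f ((0:Polynomial Fq) * Polynomial.X + Polynomial.C a)) = _
    rw [← Finset.add_sum_erase _ _ (Finset.mem_univ (0 : Fq)), h0]
    congr 1
    rw [Finset.sum_congr rfl (fun a ha => hterm a (Finset.ne_of_mem_erase ha)),
      Finset.sum_const, Finset.card_erase_of_mem (Finset.mem_univ _), Finset.card_univ,
      nsmul_eq_mul, Nat.cast_sub hcard, Nat.cast_one, ← hq]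
  have hsh : Summable h := by
    have hnn : 0 ≤ fun p : Polynomial Fq × Fq => f (e.symm p) :=
      fun p => le_max_right _ _
    have := ((summable_prod_of_nonneg hnn).1 hsF).2
    apply this.congr
    intro w
    simp only [hh]
    exact tsum_fintype _
  have hsg : Summable (fun w => q ^ (R + 1) * f₁ w) := hsf₁.mul_left _
  rw [step1]
  rw [tsum_sub_single h (fun w => q ^ (R + 1) * f₁ w) 0 hsh hsg hwne]
  rw [tsum_mul_left, hzero]
  have hf₁0 : f₁ 0 = x := by
    simp only [hf₁, absA_zero]
    rw [zero_pow (by omega : R ≠ 0), zero_mul, sub_zero]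
    exact max_eq_left (le_of_lt hx0)
  rw [hf₁0, pow_succ]
  ring

/-! ### eps rank 0 and delta recursion -/

lemma eps_rank0 {R : ℕ} (s : Fin 0 → ℝ) (x : ℝ) : epsFun Fq R 0 s x = x := by
  unfold epsFun
  have : IsEmpty {y : Fin 0 → Polynomial Fq // y ≠ 0} := by
    constructor
    rintro ⟨y, hy⟩
    exact hy (funext fun i => i.elim0)
  rw [tsum_empty, add_zero]

lemma delta_rank0 {R : ℕ} (s : Fin 0 → ℝ) : deltaFun Fq R 0 s = 0 := by
  unfold deltaFun
  simp

lemma prefix_eq {k : ℕ} (σ : Fin (k+1) → ℝ) (j : Fin k) :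
    (fun l : Fin ((j.castSucc : Fin (k+1)) : ℕ) => σ (Fin.castLE (j.castSucc).isLt.le l))
      = (fun l : Fin (j : ℕ) => (fun j' : Fin k => σ j'.castSucc) (Fin.castLE j.isLt.le l)) := by
  funext l
  rfl

lemma prefix_eq_last {k : ℕ} (σ : Fin (k+1) → ℝ) :
    (fun l : Fin (((Fin.last k) : Fin (k+1)) : ℕ) => σ (Fin.castLE (Fin.last k).isLt.le l))
      = (fun j' : Fin k => σ j'.castSucc) := by
  funext l
  rfl

lemma delta_rec {R k : ℕ} (hR : 1 ≤ R) (σ : Fin (k+1) → ℝ) :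
    ((Fintype.card Fq : ℝ) ^ (R + (k+1)) - 1) * deltaFun Fq R (k+1) σ
      = (Fintype.card Fq : ℝ) * ((Fintype.card Fq : ℝ) ^ (R + k) - 1) *
          deltaFun Fq R k (fun j => σ j.castSucc)
        + ((Fintype.card Fq : ℝ) - 1) *
            epsFun Fq R k (fun j => σ j.castSucc) (σ (Fin.last k)) := by
  set q : ℝ := (Fintype.card Fq : ℝ) with hq
  have hq1 : 1 < q := one_lt_q
  have h1 : q ^ (R + (k+1)) - 1 ≠ 0 := by
    have : 1 < q ^ (R + (k+1)) := one_lt_pow₀ hq1 (by omega : R + (k+1) ≠ 0)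
    linarith
  have h2 : q ^ (R + k) - 1 ≠ 0 := by
    have : 1 < q ^ (R + k) := one_lt_pow₀ hq1 (by omega : R + k ≠ 0)
    linarith
  unfold deltaFun
  rw [Fin.sum_univ_castSucc]
  have hrw : ∀ j : Fin k,
      q ^ (k + 1 - 1 - ((j.castSucc : Fin (k+1)) : ℕ)) *
        epsFun Fq R ((j.castSucc : Fin (k+1)) : ℕ)
          (fun l => σ (Fin.castLE (j.castSucc).isLt.le l)) (σ j.castSucc)
      = q * (q ^ (k - 1 - (j : ℕ)) *
          epsFun Fq R (j : ℕ)
            (fun l => (fun j' : Fin k => σ j'.castSucc) (Fin.castLE j.isLt.le l))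
            ((fun j' : Fin k => σ j'.castSucc) j)) := by
    intro j
    have heq : epsFun Fq R ((j.castSucc : Fin (k+1)) : ℕ)
        (fun l => σ (Fin.castLE (j.castSucc).isLt.le l)) (σ j.castSucc)
        = epsFun Fq R (j : ℕ)
            (fun l => (fun j' : Fin k => σ j'.castSucc) (Fin.castLE j.isLt.le l))
            ((fun j' : Fin k => σ j'.castSucc) j) := rfl
    have hexp : k + 1 - 1 - ((j.castSucc : Fin (k+1)) : ℕ) = k - 1 - (j : ℕ) + 1 := by
      have := j.isLt
      simp only [Fin.coe_castSucc]
      omega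
    rw [heq, hexp, pow_succ]
    ring
  rw [Finset.sum_congr rfl (fun j _ => hrw j), ← Finset.mul_sum, prefix_eq_last σ]
  have hlast : (k + 1 - 1 - (((Fin.last k) : Fin (k+1)) : ℕ)) = 0 := by
    simp [Fin.last]
  rw [hlast, pow_zero, one_mul]
  rw [← hq]
  field_simp
  ring_nf
  rfl

/-! ### homogeneity -/

def HomProp (Fq : Type) [Field Fq] [Fintype Fq] (R k : ℕ) (t : Fin k → ℝ) : Prop :=
  ∀ c : ℝ, 0 ≤ c → (∀ i, t i ≤ c) →
    epsFun Fq R k t ((Fintype.card Fq : ℝ) ^ R * c)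
      = (Fintype.card Fq : ℝ) ^ (R + k) * epsFun Fq R k t c
        - ((Fintype.card Fq : ℝ) ^ (R + k) - 1) * deltaFun Fq R k t

lemma homIter_of {R k : ℕ} {t : Fin k → ℝ} (H : HomProp Fq R k t) :
    ∀ (d : ℕ) (c : ℝ), 0 ≤ c → (∀ i, t i ≤ c) →
      epsFun Fq R k t ((Fintype.card Fq : ℝ) ^ (R * d) * c)
        = (Fintype.card Fq : ℝ) ^ ((R + k) * d) *
            (epsFun Fq R k t c - deltaFun Fq R k t) + deltaFun Fq R k t := by
  intro d
  induction d with
  | zero => intro c hc0 hc; norm_num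
  | succ d ih =>
    intro c hc0 hc
    have hq0 : (0:ℝ) < (Fintype.card Fq : ℝ) := q_pos
    have h1 : ((Fintype.card Fq : ℝ)) ^ (R * (d+1)) * c
        = (Fintype.card Fq : ℝ) ^ R * ((Fintype.card Fq : ℝ) ^ (R * d) * c) := by
      rw [show R * (d+1) = R * d + R by ring, pow_add]; ring
    have hone : (1:ℝ) ≤ (Fintype.card Fq : ℝ) ^ (R * d) :=
      one_le_pow₀ (le_of_lt (one_lt_q))
    have hge : ∀ i, t i ≤ (Fintype.card Fq : ℝ) ^ (R * d) * c := fun i =>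
      le_trans (hc i) (le_mul_of_one_le_left hc0 hone)
    rw [h1, H _ (by positivity) hge, ih c hc0 hc,
      show (R + k) * (d+1) = (R + k) * d + (R + k) by ring, pow_add]
    ring

lemma posHat_of {R k : ℕ} (hR : 1 ≤ R) {t : Fin k → ℝ} (ht : ∀ i, 0 < t i)
    (H : HomProp Fq R k t) {c : ℝ} (hc0 : 0 < c) (hc : ∀ i, t i ≤ c) :
    0 < epsFun Fq R k t c - deltaFun Fq R k t := by
  set q : ℝ := (Fintype.card Fq : ℝ) with hq
  have hq1 : 1 < q := one_lt_q
  have hqR : 1 < q ^ R := one_lt_pow₀ hq1 (by omega : R ≠ 0)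
  have hcle : c ≤ q ^ R * c := le_mul_of_one_le_left (le_of_lt hc0) (le_of_lt hqR)
  have hslope := eps_slope (Fq := Fq) hR ht hcle
  have hH := H c (le_of_lt hc0) hc
  by_contra hcon
  push_neg at hcon
  have hQ : 1 < q ^ (R + k) := one_lt_pow₀ hq1 (by omega : R + k ≠ 0)
  nlinarith

lemma hom (R : ℕ) (hR : 1 ≤ R) :
    ∀ (k : ℕ) (t : Fin k → ℝ), (∀ i, 0 < t i) → Monotone t → HomProp Fq R k t := by
  intro k
  induction k with
  | zero =>
    intro t ht hm c hc0 hc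
    rw [eps_rank0, eps_rank0, delta_rank0]
    norm_num
  | succ k ih =>
    intro t ht hmono c hc0 hc
    have hq1 : 1 < (Fintype.card Fq : ℝ) := one_lt_q
    have ht'pos : ∀ j : Fin k, 0 < t j.castSucc := fun j => ht _
    have ht'mono : Monotone (fun j : Fin k => t j.castSucc) := fun a b hab =>
      hmono (Fin.castSucc_le_castSucc_iff.mpr hab)
    have H' : HomProp Fq R k (fun j : Fin k => t j.castSucc) :=
      ih _ ht'pos ht'mono
    have hlastpos : 0 < t (Fin.last k) := ht _
    have hcpos : 0 < c := lt_of_lt_of_le hlastpos (hc _)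
    have ht'le_last : ∀ j : Fin k, t j.castSucc ≤ t (Fin.last k) := fun j =>
      hmono (Fin.le_last _)
    have hθpos : 0 < epsFun Fq R k (fun j : Fin k => t j.castSucc) (t (Fin.last k))
        - deltaFun Fq R k (fun j : Fin k => t j.castSucc) :=
      posHat_of hR ht'pos H' hlastpos ht'le_last
    -- the general peel+homogenize step
    have genl : ∀ y : ℝ, 0 < y → (∀ j : Fin k, t j.castSucc ≤ y) →
        epsFun Fq R (k+1) t y = deltaFun Fq R k (fun j : Fin k => t j.castSucc)
          + ∑' v : Polynomial Fq,
          max ((epsFun Fq R k (fun j : Fin k => t j.castSucc) y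
              - deltaFun Fq R k (fun j : Fin k => t j.castSucc))
            - (absA Fq v) ^ (R + k) *
              (epsFun Fq R k (fun j : Fin k => t j.castSucc) (t (Fin.last k))
                - deltaFun Fq R k (fun j : Fin k => t j.castSucc))) 0 := by
      intro y hy0 hy
      rw [peel hR ht (le_of_lt hy0)]
      set A : Polynomial Fq → ℝ := fun v =>
        max (epsFun Fq R k (fun j : Fin k => t j.castSucc) y
          - epsFun Fq R k (fun j : Fin k => t j.castSucc)
              ((absA Fq v) ^ R * t (Fin.last k))) 0 with hA
      set B : Polynomial Fq → ℝ := fun v =>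
        max ((epsFun Fq R k (fun j : Fin k => t j.castSucc) y
              - deltaFun Fq R k (fun j : Fin k => t j.castSucc))
          - (absA Fq v) ^ (R + k) *
            (epsFun Fq R k (fun j : Fin k => t j.castSucc) (t (Fin.last k))
              - deltaFun Fq R k (fun j : Fin k => t j.castSucc))) 0 with hB
      have hAB : ∀ v : Polynomial Fq, v ≠ 0 → A v = B v := by
        intro v hv
        have habs : absA Fq v = (Fintype.card Fq : ℝ) ^ v.natDegree := by
          unfold absA; rw [if_neg hv]
        have harg : (absA Fq v) ^ R * t (Fin.last k)
            = (Fintype.card Fq : ℝ) ^ (R * v.natDegree) * t (Fin.last k) := by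
          rw [habs, ← pow_mul, Nat.mul_comm]
        have hit := homIter_of H' v.natDegree (t (Fin.last k))
          (le_of_lt hlastpos) ht'le_last
        have habs2 : (absA Fq v) ^ (R + k) = (Fintype.card Fq : ℝ) ^ ((R + k) * v.natDegree) := by
          rw [habs, ← pow_mul, Nat.mul_comm]
        simp only [hA, hB, harg, habs2, hit]
        congr 1
        ring
      have hA0 : A 0 = epsFun Fq R k (fun j : Fin k => t j.castSucc) y := by
        simp only [hA, absA_zero]
        rw [zero_pow (by omega : R ≠ 0), zero_mul, eps_zero ht'pos, sub_zero]
        exact max_eq_left (eps_nonneg hR ht'pos (le_of_lt hy0))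
      have hB0 : B 0 = epsFun Fq R k (fun j : Fin k => t j.castSucc) y
          - deltaFun Fq R k (fun j : Fin k => t j.castSucc) := by
        simp only [hB, absA_zero]
        rw [zero_pow (by omega : R + k ≠ 0), zero_mul, sub_zero]
        exact max_eq_left (le_of_lt (posHat_of hR ht'pos H' hy0 hy))
      have hsA : Summable A := by
        apply summable_of_ne_finset_zero (s := (finite_onedim_support hR hlastpos y).toFinset)
        intro v hv
        rw [Set.Finite.mem_toFinset] at hv
        simp only [Set.mem_setOf_eq, not_lt] at hv
        have := eps_mono (Fq := Fq) hR ht'pos hv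
        simp only [hA]
        exact max_eq_right (by linarith)
      have hsB : Summable B := by
        apply summable_of_ne_finset_zero
          (s := (finite_onedim_support (by omega : 1 ≤ R + k) hθpos
            (epsFun Fq R k (fun j : Fin k => t j.castSucc) y
              - deltaFun Fq R k (fun j : Fin k => t j.castSucc))).toFinset)
        intro v hv
        rw [Set.Finite.mem_toFinset] at hv
        simp only [Set.mem_setOf_eq, not_lt] at hv
        simp only [hB]
        exact max_eq_right (by linarith)
      rw [tsum_sub_single A B 0 hsA hsB hAB, hA0, hB0]
      ring
    -- apply at c and q^R * c
    have hone : (1:ℝ) ≤ (Fintype.card Fq : ℝ) ^ R := one_le_pow₀ (le_of_lt hq1)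
    have hgc := genl c hcpos (fun j => hc _)
    have hgqc := genl ((Fintype.card Fq : ℝ) ^ R * c) (by positivity)
      (fun j => le_trans (hc _) (le_mul_of_one_le_left (le_of_lt hcpos) hone))
    have hX : epsFun Fq R k (fun j : Fin k => t j.castSucc) ((Fintype.card Fq : ℝ) ^ R * c)
          - deltaFun Fq R k (fun j : Fin k => t j.castSucc)
        = (Fintype.card Fq : ℝ) ^ (R + k) *
            (epsFun Fq R k (fun j : Fin k => t j.castSucc) c
              - deltaFun Fq R k (fun j : Fin k => t j.castSucc)) := by
      rw [H' c (le_of_lt hcpos) (fun j => hc _)]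
      ring
    rw [hX] at hgqc
    have hXθ : epsFun Fq R k (fun j : Fin k => t j.castSucc) (t (Fin.last k))
          - deltaFun Fq R k (fun j : Fin k => t j.castSucc)
        ≤ epsFun Fq R k (fun j : Fin k => t j.castSucc) c
          - deltaFun Fq R k (fun j : Fin k => t j.castSucc) := by
      have := eps_mono (Fq := Fq) hR ht'pos (hc (Fin.last k))
      linarith
    have hr1 := rank1 (Fq := Fq) (R := R + k) (by omega : 1 ≤ R + k) hθpos hXθ
    rw [hr1] at hgqc
    have hsum_c : (∑' v : Polynomial Fq,
        max ((epsFun Fq R k (fun j : Fin k => t j.castSucc) c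
            - deltaFun Fq R k (fun j : Fin k => t j.castSucc))
          - (absA Fq v) ^ (R + k) *
            (epsFun Fq R k (fun j : Fin k => t j.castSucc) (t (Fin.last k))
              - deltaFun Fq R k (fun j : Fin k => t j.castSucc))) 0)
        = epsFun Fq R (k+1) t c - deltaFun Fq R k (fun j : Fin k => t j.castSucc) := by
      linarith [hgc]
    rw [hsum_c] at hgqc
    have hdrec := delta_rec (Fq := Fq) hR t
    rw [hgqc]
    linear_combination hdrec

/-! ### peel for all x -/

lemma peel' {R k : ℕ} (hR : 1 ≤ R) {σ : Fin (k+1) → ℝ} (hσ : ∀ i, 0 < σ i) (x : ℝ) :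
    epsFun Fq R (k+1) σ x = min x 0 + ∑' v : Polynomial Fq,
      max (epsFun Fq R k (fun j => σ j.castSucc) x
         - epsFun Fq R k (fun j => σ j.castSucc) ((absA Fq v) ^ R * σ (Fin.last k))) 0 := by
  have hσ' : ∀ j : Fin k, 0 < σ j.castSucc := fun j => hσ _
  rcases le_or_gt 0 x with hx | hx
  · rw [peel hR hσ hx, min_eq_right hx, zero_add]
  · rw [eps_of_nonpos hσ (le_of_lt hx), min_eq_left (le_of_lt hx)]
    have hz : ∀ v : Polynomial Fq,
        max (epsFun Fq R k (fun j => σ j.castSucc) x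
          - epsFun Fq R k (fun j => σ j.castSucc) ((absA Fq v) ^ R * σ (Fin.last k))) 0 = 0 := by
      intro v
      have h1 : epsFun Fq R k (fun j => σ j.castSucc) x = x := eps_of_nonpos hσ' (le_of_lt hx)
      have h2 : (0:ℝ) ≤ epsFun Fq R k (fun j => σ j.castSucc) ((absA Fq v) ^ R * σ (Fin.last k)) :=
        eps_nonneg hR hσ' (mul_nonneg (pow_nonneg (absA_nonneg _) _) (le_of_lt (hσ _)))
      rw [h1]
      exact max_eq_right (by linarith)
    rw [tsum_congr hz, tsum_zero, add_zero]

/-! ### composition lemma -/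

lemma CL (r m : ℕ) (hr : 1 ≤ r) : ∀ (n : ℕ) (s : Fin (m + n) → ℝ),
    (∀ i, 0 < s i) → Monotone s → ∀ x : ℝ, 0 ≤ x →
    epsFun Fq r (m + n) s x
      = deltaFun Fq r m (fun j => s (Fin.castAdd n j))
        + epsFun Fq (r + m) n
          (fun i => epsFun Fq r m (fun j => s (Fin.castAdd n j)) (s (Fin.natAdd m i))
                    - deltaFun Fq r m (fun j => s (Fin.castAdd n j)))
          (epsFun Fq r m (fun j => s (Fin.castAdd n j)) x
            - deltaFun Fq r m (fun j => s (Fin.castAdd n j))) := by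
  intro n
  induction n with
  | zero =>
    intro s hs hmono x hx
    have hT : (fun j : Fin m => s (Fin.castAdd 0 j)) = s := rfl
    have h0 : epsFun Fq r (m + 0) s x = epsFun Fq r m s x := rfl
    rw [hT, h0, eps_rank0]
    ring
  | succ n ih =>
    intro s hs hmono x hx
    have hrm : 1 ≤ r + m := by omega
    -- abbreviations (as rfl equations)
    have hTs : (fun j : Fin m => s ((Fin.castAdd n j).castSucc))
        = (fun j : Fin m => s (Fin.castAdd (n+1) j)) := rfl
    have hTpos : ∀ j : Fin m, 0 < s (Fin.castAdd (n+1) j) := fun j => hs _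
    have hTmono : Monotone (fun j : Fin m => s (Fin.castAdd (n+1) j)) := fun a b hab =>
      hmono (by rw [Fin.le_def]; simpa using hab)
    have homT : HomProp Fq r m (fun j => s (Fin.castAdd (n+1) j)) :=
      hom r hr m _ hTpos hTmono
    have hs₀pos : ∀ j : Fin (m+n), 0 < s j.castSucc := fun j => hs _
    have hs₀mono : Monotone (fun j : Fin (m+n) => s j.castSucc) := fun a b hab =>
      hmono (Fin.castSucc_le_castSucc_iff.mpr hab)
    have hlastpos : 0 < s (Fin.last (m+n)) := hs _
    have hTle_last : ∀ j : Fin m, s (Fin.castAdd (n+1) j) ≤ s (Fin.last (m+n)) := fun j =>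
      hmono (Fin.le_last _)
    -- θn
    have hθpos : 0 < epsFun Fq r m (fun j => s (Fin.castAdd (n+1) j)) (s (Fin.last (m+n)))
        - deltaFun Fq r m (fun j => s (Fin.castAdd (n+1) j)) :=
      posHat_of hr hTpos homT hlastpos hTle_last
    have hΔnn : 0 ≤ deltaFun Fq r m (fun j => s (Fin.castAdd (n+1) j)) := delta_nonneg hTpos
    -- the induction hypothesis specialised, with prefix rewrites
    have hih : ∀ z : ℝ, 0 ≤ z →
        epsFun Fq r (m + n) (fun j : Fin (m+n) => s j.castSucc) z
          = deltaFun Fq r m (fun j => s (Fin.castAdd (n+1) j))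
            + epsFun Fq (r + m) n
              (fun i : Fin n => epsFun Fq r m (fun j => s (Fin.castAdd (n+1) j))
                  (s (Fin.natAdd m i.castSucc))
                - deltaFun Fq r m (fun j => s (Fin.castAdd (n+1) j)))
              (epsFun Fq r m (fun j => s (Fin.castAdd (n+1) j)) z
                - deltaFun Fq r m (fun j => s (Fin.castAdd (n+1) j))) := by
      intro z hz
      exact ih (fun j => s j.castSucc) hs₀pos hs₀mono z hz
    -- positivity of the new weights
    have hS'pos : ∀ i : Fin (n+1),
        0 < epsFun Fq r m (fun j => s (Fin.castAdd (n+1) j)) (s (Fin.natAdd m i))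
          - deltaFun Fq r m (fun j => s (Fin.castAdd (n+1) j)) := by
      intro i
      apply posHat_of hr hTpos homT (hs _)
      intro j
      apply hmono
      rw [Fin.le_def]
      simp [Fin.natAdd]
      omega
    have hS'₀pos : ∀ i : Fin n,
        0 < epsFun Fq r m (fun j => s (Fin.castAdd (n+1) j)) (s (Fin.natAdd m i.castSucc))
          - deltaFun Fq r m (fun j => s (Fin.castAdd (n+1) j)) := fun i => hS'pos i.castSucc
    have hlast_eq : s (Fin.natAdd m (Fin.last n)) = s (Fin.last (m+n)) := rfl
    -- peel on the left
    have hbridge : epsFun Fq r (m + (n+1)) s x = epsFun Fq r ((m+n)+1) s x := rfl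
    rw [hbridge, peel (R := r) (k := m + n) hr (σ := s) hs hx]
    set A : Polynomial Fq → ℝ := fun v =>
      max (epsFun Fq r (m+n) (fun j => s j.castSucc) x
        - epsFun Fq r (m+n) (fun j => s j.castSucc)
            ((absA Fq v) ^ r * s (Fin.last (m+n)))) 0 with hA
    set B : Polynomial Fq → ℝ := fun v =>
      max (epsFun Fq (r+m) n
            (fun i : Fin n => epsFun Fq r m (fun j => s (Fin.castAdd (n+1) j))
                (s (Fin.natAdd m i.castSucc))
              - deltaFun Fq r m (fun j => s (Fin.castAdd (n+1) j)))
            (epsFun Fq r m (fun j => s (Fin.castAdd (n+1) j)) x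
              - deltaFun Fq r m (fun j => s (Fin.castAdd (n+1) j)))
        - epsFun Fq (r+m) n
            (fun i : Fin n => epsFun Fq r m (fun j => s (Fin.castAdd (n+1) j))
                (s (Fin.natAdd m i.castSucc))
              - deltaFun Fq r m (fun j => s (Fin.castAdd (n+1) j)))
            ((absA Fq v) ^ (r+m) *
              (epsFun Fq r m (fun j => s (Fin.castAdd (n+1) j)) (s (Fin.natAdd m (Fin.last n)))
                - deltaFun Fq r m (fun j => s (Fin.castAdd (n+1) j))))) 0 with hB
    have hAB : ∀ v : Polynomial Fq, v ≠ 0 → A v = B v := by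
      intro v hv
      have habs : absA Fq v = (Fintype.card Fq : ℝ) ^ v.natDegree := by
        unfold absA; rw [if_neg hv]
      have harg : (absA Fq v) ^ r * s (Fin.last (m+n))
          = (Fintype.card Fq : ℝ) ^ (r * v.natDegree) * s (Fin.last (m+n)) := by
        rw [habs, ← pow_mul, Nat.mul_comm]
      have habs2 : (absA Fq v) ^ (r + m)
          = (Fintype.card Fq : ℝ) ^ ((r + m) * v.natDegree) := by
        rw [habs, ← pow_mul, Nat.mul_comm]
      have hcv0 : (0:ℝ) ≤ (absA Fq v) ^ r * s (Fin.last (m+n)) :=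
        mul_nonneg (pow_nonneg (absA_nonneg _) _) (le_of_lt hlastpos)
      have hit := homIter_of homT v.natDegree (s (Fin.last (m+n)))
        (le_of_lt hlastpos) hTle_last
      have hsimp : ((Fintype.card Fq : ℝ) ^ ((r + m) * v.natDegree) *
            (epsFun Fq r m (fun j => s (Fin.castAdd (n+1) j)) (s (Fin.last (m+n)))
              - deltaFun Fq r m (fun j => s (Fin.castAdd (n+1) j)))
            + deltaFun Fq r m (fun j => s (Fin.castAdd (n+1) j)))
          - deltaFun Fq r m (fun j => s (Fin.castAdd (n+1) j))
          = (absA Fq v) ^ (r+m) *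
            (epsFun Fq r m (fun j => s (Fin.castAdd (n+1) j)) (s (Fin.natAdd m (Fin.last n)))
              - deltaFun Fq r m (fun j => s (Fin.castAdd (n+1) j))) := by
        rw [habs2, hlast_eq]
        ring
      simp only [hA, hB]
      rw [hih x hx, hih _ hcv0, harg, hit, hsimp]
      congr 1
      ring
    have hA0 : A 0 = deltaFun Fq r m (fun j => s (Fin.castAdd (n+1) j))
        + epsFun Fq (r+m) n
            (fun i : Fin n => epsFun Fq r m (fun j => s (Fin.castAdd (n+1) j))
                (s (Fin.natAdd m i.castSucc))
              - deltaFun Fq r m (fun j => s (Fin.castAdd (n+1) j)))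
            (epsFun Fq r m (fun j => s (Fin.castAdd (n+1) j)) x
              - deltaFun Fq r m (fun j => s (Fin.castAdd (n+1) j))) := by
      simp only [hA, absA_zero]
      rw [zero_pow (by omega : r ≠ 0), zero_mul, eps_zero hs₀pos, sub_zero, hih x hx]
      apply max_eq_left
      rcases le_or_gt 0 (epsFun Fq r m (fun j => s (Fin.castAdd (n+1) j)) x
          - deltaFun Fq r m (fun j => s (Fin.castAdd (n+1) j))) with hX0 | hX0
      · have := eps_nonneg (Fq := Fq) hrm hS'₀pos hX0
        linarith
      · have h1 := eps_of_nonpos (Fq := Fq) (r := r + m) hS'₀pos (le_of_lt hX0)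
        have h2 := eps_nonneg (Fq := Fq) hr hTpos hx
        rw [h1]
        linarith
    have hB0 : B 0 = max (epsFun Fq (r+m) n
            (fun i : Fin n => epsFun Fq r m (fun j => s (Fin.castAdd (n+1) j))
                (s (Fin.natAdd m i.castSucc))
              - deltaFun Fq r m (fun j => s (Fin.castAdd (n+1) j)))
            (epsFun Fq r m (fun j => s (Fin.castAdd (n+1) j)) x
              - deltaFun Fq r m (fun j => s (Fin.castAdd (n+1) j)))) 0 := by
      simp only [hB, absA_zero]
      rw [zero_pow (by omega : r + m ≠ 0), zero_mul, eps_zero hS'₀pos, sub_zero]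
    have hsA : Summable A := by
      apply summable_of_ne_finset_zero (s := (finite_onedim_support hr hlastpos x).toFinset)
      intro v hv
      rw [Set.Finite.mem_toFinset] at hv
      simp only [Set.mem_setOf_eq, not_lt] at hv
      have := eps_mono (Fq := Fq) hr hs₀pos hv
      simp only [hA]
      exact max_eq_right (by linarith)
    have hsB : Summable B := by
      apply summable_of_ne_finset_zero
        (s := (finite_onedim_support (by omega : 1 ≤ r + m) (hS'pos (Fin.last n))
          (epsFun Fq r m (fun j => s (Fin.castAdd (n+1) j)) x
            - deltaFun Fq r m (fun j => s (Fin.castAdd (n+1) j)))).toFinset)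
      intro v hv
      rw [Set.Finite.mem_toFinset] at hv
      simp only [Set.mem_setOf_eq, not_lt] at hv
      have := eps_mono (Fq := Fq) hrm hS'₀pos hv
      simp only [hB]
      exact max_eq_right (by linarith)
    rw [tsum_sub_single A B 0 hsA hsB hAB, hA0, hB0]
    rw [peel' hrm hS'pos]
    have htsum : (∑' v : Polynomial Fq,
        max (epsFun Fq (r+m) n
            (fun j : Fin n => epsFun Fq r m (fun j' => s (Fin.castAdd (n+1) j'))
                (s (Fin.natAdd m j.castSucc))
              - deltaFun Fq r m (fun j' => s (Fin.castAdd (n+1) j')))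
            (epsFun Fq r m (fun j => s (Fin.castAdd (n+1) j)) x
              - deltaFun Fq r m (fun j => s (Fin.castAdd (n+1) j)))
          - epsFun Fq (r+m) n
            (fun j : Fin n => epsFun Fq r m (fun j' => s (Fin.castAdd (n+1) j'))
                (s (Fin.natAdd m j.castSucc))
              - deltaFun Fq r m (fun j' => s (Fin.castAdd (n+1) j')))
            ((absA Fq v) ^ (r+m) *
              (epsFun Fq r m (fun j => s (Fin.castAdd (n+1) j)) (s (Fin.natAdd m (Fin.last n)))
                - deltaFun Fq r m (fun j => s (Fin.castAdd (n+1) j))))) 0)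
        = ∑' v, B v := tsum_congr fun v => rfl
    rw [htsum]
    rcases le_or_gt 0 (epsFun Fq r m (fun j => s (Fin.castAdd (n+1) j)) x
        - deltaFun Fq r m (fun j => s (Fin.castAdd (n+1) j))) with hX0 | hX0
    · have h1 := eps_nonneg (Fq := Fq) hrm hS'₀pos hX0
      rw [max_eq_left h1, min_eq_right hX0]
      ring
    · have h1 := eps_of_nonpos (Fq := Fq) (r := r + m) hS'₀pos (le_of_lt hX0)
      rw [h1, max_eq_right (le_of_lt hX0), min_eq_left (le_of_lt hX0)]
      ring

/-! ### delta decomposition -/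

lemma DL (r m : ℕ) (hr : 1 ≤ r) : ∀ (n : ℕ) (s : Fin (m + n) → ℝ),
    (∀ i, 0 < s i) → Monotone s →
    deltaFun Fq r (m + n) s
      = deltaFun Fq r m (fun j => s (Fin.castAdd n j))
        + deltaFun Fq (r + m) n
          (fun i => epsFun Fq r m (fun j => s (Fin.castAdd n j)) (s (Fin.natAdd m i))
                    - deltaFun Fq r m (fun j => s (Fin.castAdd n j))) := by
  intro n
  induction n with
  | zero =>
    intro s hs hmono
    have hT : (fun j : Fin m => s (Fin.castAdd 0 j)) = s := rfl
    have h0 : deltaFun Fq r (m + 0) s = deltaFun Fq r m s := rfl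
    rw [h0, hT, delta_rank0, add_zero]
  | succ n ih =>
    intro s hs hmono
    have hrm : 1 ≤ r + m := by omega
    have hs₀pos : ∀ j : Fin (m+n), 0 < s j.castSucc := fun j => hs _
    have hs₀mono : Monotone (fun j : Fin (m+n) => s j.castSucc) := fun a b hab =>
      hmono (Fin.castSucc_le_castSucc_iff.mpr hab)
    have hlastnn : (0:ℝ) ≤ s (Fin.last (m+n)) := le_of_lt (hs _)
    have hih : deltaFun Fq r (m + n) (fun j : Fin (m+n) => s j.castSucc)
        = deltaFun Fq r m (fun j => s (Fin.castAdd (n+1) j))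
          + deltaFun Fq (r + m) n
            (fun i : Fin n => epsFun Fq r m (fun j => s (Fin.castAdd (n+1) j))
                (s (Fin.natAdd m i.castSucc))
              - deltaFun Fq r m (fun j => s (Fin.castAdd (n+1) j))) :=
      ih (fun j => s j.castSucc) hs₀pos hs₀mono
    have hCL : epsFun Fq r (m + n) (fun j : Fin (m+n) => s j.castSucc) (s (Fin.last (m+n)))
        = deltaFun Fq r m (fun j => s (Fin.castAdd (n+1) j))
          + epsFun Fq (r + m) n
            (fun i : Fin n => epsFun Fq r m (fun j => s (Fin.castAdd (n+1) j))
                (s (Fin.natAdd m i.castSucc))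
              - deltaFun Fq r m (fun j => s (Fin.castAdd (n+1) j)))
            (epsFun Fq r m (fun j => s (Fin.castAdd (n+1) j)) (s (Fin.last (m+n)))
              - deltaFun Fq r m (fun j => s (Fin.castAdd (n+1) j))) :=
      CL r m hr n (fun j => s j.castSucc) hs₀pos hs₀mono (s (Fin.last (m+n))) hlastnn
    have hdrecL := delta_rec (Fq := Fq) (R := r) (k := m + n) hr s
    have hdrecR := delta_rec (Fq := Fq) (R := r + m) (k := n) hrm
      (fun i : Fin (n+1) => epsFun Fq r m (fun j => s (Fin.castAdd (n+1) j))
          (s (Fin.natAdd m i))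
        - deltaFun Fq r m (fun j => s (Fin.castAdd (n+1) j)))
    have hbr : s (Fin.natAdd m (Fin.last n)) = s (Fin.last (m+n)) := rfl
    rw [hbr] at hdrecR
    have hg : deltaFun Fq r (m + (n+1)) s = deltaFun Fq r ((m + n) + 1) s := rfl
    rw [hg]
    have hne : ((Fintype.card Fq : ℝ) ^ (r + ((m + n) + 1)) - 1) ≠ 0 := by
      have : 1 < (Fintype.card Fq : ℝ) ^ (r + ((m + n) + 1)) :=
        one_lt_pow₀ (one_lt_q) (by omega : r + ((m + n) + 1) ≠ 0)
      linarith
    apply mul_left_cancel₀ hne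
    linear_combination hdrecL
      + (Fintype.card Fq : ℝ) * ((Fintype.card Fq : ℝ) ^ (r + (m + n)) - 1) * hih
      + ((Fintype.card Fq : ℝ) - 1) * hCL - hdrecR

end St9

/-- Let `r ≥ 1`, `n, m ≥ 0` and `s ∈ ℝ_{>0}^{m+n}` be nondecreasing.  Put
`t = (s_1, …, s_m)`.  Then `s'_i := ε̂^{r,m}_t(s_{m+i}) > 0` for `1 ≤ i ≤ n`, and for every
`x ≥ 0` one has `ε̂^{r,n+m}_s(x) = ε̂^{r+m,n}_{s'}(ε̂^{r,m}_t(x))`. -/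
theorem statement9 (Fq : Type) [Field Fq] [Fintype Fq]
    (r n m : ℕ) (hr : 1 ≤ r) (s : Fin (m + n) → ℝ) (hs : ∀ i, 0 < s i)
    (hmono : Monotone s) :
    (∀ i : Fin n,
      0 < epsHat Fq r m (fun j => s (Fin.castAdd n j)) (s (Fin.natAdd m i))) ∧
    ∀ x : ℝ, 0 ≤ x →
      epsHat Fq r (m + n) s x =
        epsHat Fq (r + m) n
          (fun i => epsHat Fq r m (fun j => s (Fin.castAdd n j)) (s (Fin.natAdd m i)))
          (epsHat Fq r m (fun j => s (Fin.castAdd n j)) x) := by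
  have hTpos : ∀ j : Fin m, 0 < s (Fin.castAdd n j) := fun j => hs _
  have hTmono : Monotone (fun j : Fin m => s (Fin.castAdd n j)) := fun a b hab =>
    hmono (by rw [Fin.le_def]; simpa using hab)
  have homT : St9.HomProp Fq r m (fun j => s (Fin.castAdd n j)) :=
    St9.hom r hr m _ hTpos hTmono
  constructor
  · intro i
    exact St9.posHat_of hr hTpos homT (hs _) (fun j => hmono (by
      rw [Fin.le_def]
      simp only [Fin.coe_castAdd, Fin.coe_natAdd]
      omega))
  · intro x hx
    have hCL := St9.CL (Fq := Fq) r m hr n s hs hmono x hx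
    have hDL := St9.DL (Fq := Fq) r m hr n s hs hmono
    simp only [epsHat]
    linarith [hCL, hDL]
end
end
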